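/- arXiv:1011.0043 — 5 statements merged into one kernel-verified Lean document; each statement's English description precedes it below -/
import Mathlib

section
/- Let n ≥ 1 and let R ∈ M_n(ℂ) be an upper triangular Toeplitz matrix with entries R_{ij} = z_{j−i} for j ≥ i (and 0 below the diagonal), where z_1 ≠ 0. If A ∈ M_n(ℂ) is any matrix such that ‖f(A)‖ = ‖f(R)‖ for every polynomial f ∈ ℂ[t], then A is unitarily similar to R, i.e., there exists a unitary U ∈ M_n(ℂ) with A = U*RU. -/
open Polynomial Matrix

/-- The operator norm of a complex matrix, i.e. its norm as a linear map on the
Euclidean space `ℂⁿ`; it equals `√(spr(A*A))`, the largest singular value. -/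
noncomputable def opNorm {n : ℕ} (A : Matrix (Fin n) (Fin n) ℂ) : ℝ :=
  ‖Matrix.toEuclideanCLM (𝕜 := ℂ) A‖

/-- The nilpotent upper shift matrix. -/
noncomputable def shiftM (n : ℕ) : Matrix (Fin n) (Fin n) ℂ :=
  Matrix.of fun i j => if (j : ℕ) = (i : ℕ) + 1 then 1 else 0

lemma shiftM_pow (n k : ℕ) :
    (shiftM n) ^ k = Matrix.of (fun i j : Fin n => if (j : ℕ) = (i : ℕ) + k then (1:ℂ) else 0) := by
  induction k with
  | zero =>
    ext i j
    simp [Matrix.one_apply, Fin.ext_iff, eq_comm]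
  | succ k ih =>
    ext i j
    rw [pow_succ, ih]
    simp only [Matrix.mul_apply, Matrix.of_apply, shiftM]
    by_cases h : (i : ℕ) + k < n
    · rw [Finset.sum_eq_single (⟨(i : ℕ) + k, h⟩ : Fin n)]
      · simp [← add_assoc]
      · intro l _ hl
        rw [if_neg, zero_mul]
        intro hc
        exact hl (Fin.ext hc)
      · simp
    · rw [Finset.sum_eq_zero, if_neg]
      · intro hc
        omega
      · intro l _
        rw [if_neg, zero_mul]
        intro hc
        exact h (hc ▸ l.isLt)

lemma shiftM_pow_n (n : ℕ) : (shiftM n) ^ n = 0 := by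
  rw [shiftM_pow]
  ext i j
  rw [Matrix.of_apply, if_neg, Matrix.zero_apply]
  intro hc
  omega


lemma opNorm_eq_zero {n : ℕ} {M : Matrix (Fin n) (Fin n) ℂ} (h : opNorm M = 0) : M = 0 := by
  have : Matrix.toEuclideanCLM (𝕜 := ℂ) M = 0 := by
    rwa [opNorm, norm_eq_zero] at h
  have := congrArg (Matrix.toEuclideanCLM (𝕜 := ℂ)).symm this
  simpa using this

lemma opNorm_csq {n : ℕ} (M : Matrix (Fin n) (Fin n) ℂ) :
    opNorm (Mᴴ * M) = opNorm M * opNorm M := by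
  rw [opNorm, opNorm, _root_.map_mul, ← CStarRing.norm_star_mul_self (x := Matrix.toEuclideanCLM (𝕜 := ℂ) M)]
  congr 1
  rw [← map_star]
  rfl

lemma shift_ct_mul (n k : ℕ) :
    (shiftM n ^ k)ᴴ * (shiftM n ^ k) =
      Matrix.diagonal (fun i : Fin n => if k ≤ (i : ℕ) then (1:ℂ) else 0) := by
  rw [shiftM_pow]
  ext i j
  simp only [Matrix.mul_apply, Matrix.conjTranspose_apply, Matrix.of_apply]
  by_cases h : k ≤ (i : ℕ)
  · have hlt : (i : ℕ) - k < n := lt_of_le_of_lt (Nat.sub_le _ _) i.isLt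
    rw [Finset.sum_eq_single (⟨(i : ℕ) - k, hlt⟩ : Fin n)]
    · by_cases hij : i = j
      · subst hij
        simp [Nat.sub_add_cancel h, Matrix.diagonal_apply, h]
      · have : ¬ ((j:ℕ) = (i:ℕ) - k + k) := by
          intro hc; exact hij (Fin.ext (by omega))
        have h2 : ¬ ((j:ℕ) = (i:ℕ)) := by
          intro hc; exact hij (Fin.ext hc.symm)
        simp [Nat.sub_add_cancel h, Matrix.diagonal_apply, hij, this, h2]
    · intro l _ hl
      rw [if_neg, star_zero, zero_mul]
      intro hc
      exact hl (by simp [Fin.ext_iff]; omega)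
    · simp
  · rw [Finset.sum_eq_zero, Matrix.diagonal_apply]
    · by_cases hij : i = j
      · rw [if_pos hij, if_neg h]
      · rw [if_neg hij]
    · intro l _
      rw [if_neg (by omega), star_zero, zero_mul]

lemma opNorm_proj_le_one {n : ℕ} (P : Matrix (Fin n) (Fin n) ℂ)
    (h1 : Pᴴ = P) (h2 : P * P = P) : opNorm P ≤ 1 := by
  have h3 : opNorm P * opNorm P = opNorm P := by
    rw [← opNorm_csq, h1, h2]
  nlinarith [norm_nonneg (Matrix.toEuclideanCLM (𝕜 := ℂ) P), le_refl (opNorm P)]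

lemma opNorm_shift_pow_le_one (n k : ℕ) : opNorm (shiftM n ^ k) ≤ 1 := by
  have h := opNorm_csq (shiftM n ^ k)
  rw [shift_ct_mul] at h
  have hP : opNorm (Matrix.diagonal (fun i : Fin n => if k ≤ (i : ℕ) then (1:ℂ) else 0)) ≤ 1 := by
    apply opNorm_proj_le_one
    · ext i j
      by_cases hij : i = j <;> by_cases h : k ≤ (i : ℕ) <;>
        simp [Matrix.conjTranspose_apply, Matrix.diagonal_apply, hij, h, eq_comm]
    · rw [Matrix.diagonal_mul_diagonal]
      apply congrArg
      funext i
      by_cases h : k ≤ (i : ℕ) <;> simp [h]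
  nlinarith [norm_nonneg (Matrix.toEuclideanCLM (𝕜 := ℂ) (shiftM n ^ k)), le_refl (opNorm (shiftM n ^ k))]

lemma opNorm_shift_pow_eq_one (n k : ℕ) (hk : k < n) : opNorm (shiftM n ^ k) = 1 := by
  refine le_antisymm (opNorm_shift_pow_le_one n k) ?_
  set T := Matrix.toEuclideanCLM (𝕜 := ℂ) (shiftM n ^ k) with hT
  have hi : (n - 1 : ℕ) < n := by omega
  have hi2 : (n - 1 - k : ℕ) < n := by omega
  have happ : T (EuclideanSpace.single (⟨n-1, hi⟩ : Fin n) (1:ℂ)) =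
      EuclideanSpace.single (⟨n-1-k, hi2⟩ : Fin n) (1:ℂ) := by
    have hcoord : ∀ (x : EuclideanSpace ℂ (Fin n)) (i : Fin n),
        T x i = ∑ j, (shiftM n ^ k) i j * x j := fun x i => rfl
    ext i
    rw [hcoord]
    rw [shiftM_pow]
    simp only [EuclideanSpace.single_apply, Matrix.of_apply, mul_ite, mul_one, mul_zero]
    by_cases hc : (i : ℕ) = n - 1 - k
    · rw [Finset.sum_eq_single (⟨n-1, hi⟩ : Fin n), if_pos rfl, if_pos (show ((⟨n-1, hi⟩ : Fin n) : ℕ) = (i:ℕ) + k by simp only [Fin.val_mk]; omega), if_pos (Fin.ext hc.symm).symm]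
      · intro l _ hl
        rw [if_neg hl]
      · simp
    · rw [Finset.sum_eq_zero, if_neg (fun hc2 => hc (by rw [hc2]))]
      intro l _
      by_cases hl : l = (⟨n-1, hi⟩ : Fin n)
      · rw [if_pos hl, if_neg]
        subst hl
        simp only
        omega
      · rw [if_neg hl]
  have hle := T.le_opNorm (EuclideanSpace.single (⟨n-1, hi⟩ : Fin n) (1:ℂ))
  rw [happ, EuclideanSpace.norm_single, EuclideanSpace.norm_single, norm_one, mul_one] at hle
  exact hle


lemma comp_inverse_aux (s : Polynomial ℂ) (h0 : s.coeff 0 = 0) (h1 : s.coeff 1 ≠ 0) :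
    ∀ m : ℕ, 1 ≤ m → ∃ q : Polynomial ℂ, (X : Polynomial ℂ)^m ∣ q.comp s - X := by
  intro m hm
  induction m with
  | zero => omega
  | succ m ih =>
    by_cases hm0 : m = 0
    · subst hm0
      refine ⟨C (s.coeff 1)⁻¹ * X, ?_⟩
      rw [pow_one, Polynomial.X_dvd_iff]
      simp [Polynomial.mul_comp, h0]
    · obtain ⟨q, u, hu⟩ := ih (by omega)
      obtain ⟨t, ht⟩ := Polynomial.X_dvd_iff.mpr h0
      have ta0 : t.coeff 0 = s.coeff 1 := by
        rw [ht, Polynomial.coeff_X_mul]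
      set a := s.coeff 1 with ha
      set c := u.coeff 0 with hc
      refine ⟨q - C (c / a^m) * X^m, ?_⟩
      have key : (q - C (c / a^m) * X^m).comp s - X = X^m * (u - C (c / a^m) * t^m) := by
        rw [Polynomial.sub_comp, Polynomial.mul_comp, Polynomial.C_comp, Polynomial.pow_comp,
          Polynomial.X_comp]
        have : q.comp s - X = X^m * u := hu
        rw [sub_sub, add_comm, ← sub_sub, this, ht, mul_pow]
        ring
      rw [key]
      have hinner : (X : Polynomial ℂ) ∣ (u - C (c / a^m) * t^m) := by
        rw [Polynomial.X_dvd_iff]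
        have : (t^m).coeff 0 = a^m := by
          rw [Polynomial.coeff_zero_eq_eval_zero, Polynomial.eval_pow,
            ← Polynomial.coeff_zero_eq_eval_zero, ta0]
        simp only [Polynomial.coeff_sub, Polynomial.coeff_C_mul, this, ← hc]
        field_simp
        ring
      obtain ⟨w, hw⟩ := hinner
      exact ⟨w, by rw [hw, pow_succ]; ring⟩

lemma exists_comp_inverse (r : Polynomial ℂ) (h1 : r.coeff 1 ≠ 0) (n : ℕ) (hn : 1 ≤ n) :
    ∃ q : Polynomial ℂ, (X : Polynomial ℂ)^n ∣ q.comp r - X := by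
  set s := r - C (r.coeff 0) with hs
  have hs0 : s.coeff 0 = 0 := by simp [hs]
  have hs1 : s.coeff 1 = r.coeff 1 := by simp [hs, Polynomial.coeff_C]
  obtain ⟨q0, hq0⟩ := comp_inverse_aux s hs0 (hs1 ▸ h1) n hn
  refine ⟨q0.comp (X - C (r.coeff 0)), ?_⟩
  rwa [Polynomial.comp_assoc, Polynomial.sub_comp, Polynomial.X_comp, Polynomial.C_comp]


open scoped InnerProductSpace in
lemma contraction_isometry_vec {n : ℕ} (T : EuclideanSpace ℂ (Fin n) →L[ℂ] EuclideanSpace ℂ (Fin n))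
    (hT : ‖T‖ ≤ 1) (y : EuclideanSpace ℂ (Fin n)) (hy : ‖T y‖ = ‖y‖) :
    ContinuousLinearMap.adjoint T (T y) = y := by
  rcases eq_or_ne y 0 with rfl | hy0
  · simp
  set w := ContinuousLinearMap.adjoint T (T y) with hw
  have hinner : ⟪w, y⟫_ℂ = (‖y‖ : ℂ) * ‖y‖ := by
    rw [hw, ContinuousLinearMap.adjoint_inner_left, inner_self_eq_norm_sq_to_K, hy]
    ring_nf
    norm_cast
  have hw_le : ‖w‖ ≤ ‖y‖ := by
    calc ‖w‖ ≤ ‖ContinuousLinearMap.adjoint T‖ * ‖T y‖ :=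
          (ContinuousLinearMap.adjoint T).le_opNorm (T y)
      _ = ‖T‖ * ‖T y‖ := by
          rw [LinearIsometryEquiv.norm_map (ContinuousLinearMap.adjoint (𝕜 := ℂ)) T]
      _ ≤ 1 * ‖y‖ := by
          rw [hy]; exact mul_le_mul_of_nonneg_right hT (norm_nonneg _)
      _ = ‖y‖ := one_mul _
  have hy_le : ‖y‖ ≤ ‖w‖ := by
    have h1 : ‖y‖ * ‖y‖ = ‖⟪w, y⟫_ℂ‖ := by
      rw [hinner, ← Complex.ofReal_mul, Complex.norm_real, Real.norm_eq_abs,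
        abs_of_nonneg (mul_nonneg (norm_nonneg _) (norm_nonneg _))]
    have h2 : ‖⟪w, y⟫_ℂ‖ ≤ ‖w‖ * ‖y‖ := norm_inner_le_norm w y
    have hpos : 0 < ‖y‖ := norm_pos_iff.mpr hy0
    nlinarith
  have heq : ‖w‖ = ‖y‖ := le_antisymm hw_le hy_le
  have hinner2 : ⟪w, y⟫_ℂ = (‖w‖ : ℂ) * ‖y‖ := by rw [hinner, heq]
  have h3 := inner_eq_norm_mul_iff.mp hinner2
  rw [heq] at h3
  have hny : (‖y‖ : ℂ) ≠ 0 := by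
    simpa using hy0
  exact smul_right_injective _ hny h3

open scoped InnerProductSpace in
lemma key_unitary (n : ℕ) (hn : 1 ≤ n) (B : Matrix (Fin n) (Fin n) ℂ)
    (hB : opNorm B ≤ 1) (hBn : B ^ n = 0) (hB1 : opNorm (B ^ (n-1)) = 1) :
    ∃ U : Matrix (Fin n) (Fin n) ℂ, U ∈ Matrix.unitaryGroup (Fin n) ℂ ∧
      B = star U * shiftM n * U := by
  set T := Matrix.toEuclideanCLM (𝕜 := ℂ) B with hTdef
  have hTpow : ∀ k : ℕ, T ^ k = Matrix.toEuclideanCLM (𝕜 := ℂ) (B ^ k) := fun k => (map_pow (Matrix.toEuclideanCLM (𝕜 := ℂ)) B k).symm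
  have hTn : T ^ n = 0 := by rw [hTpow, hBn, map_zero]
  have hT : ‖T‖ ≤ 1 := hB
  have hT1 : ‖T ^ (n-1)‖ = 1 := by rw [hTpow]; exact hB1
  -- norm attainment
  obtain ⟨x, hx1, hTx⟩ : ∃ x : EuclideanSpace ℂ (Fin n), ‖x‖ = 1 ∧ ‖(T ^ (n-1)) x‖ = 1 := by
    have hx0 : ‖EuclideanSpace.single (⟨0, hn⟩ : Fin n) (1:ℂ)‖ = 1 := by simp
    have hne : (Metric.sphere (0 : EuclideanSpace ℂ (Fin n)) 1).Nonempty :=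
      ⟨_, by rwa [mem_sphere_zero_iff_norm]⟩
    obtain ⟨x, hxS, hmax⟩ := (isCompact_sphere (0 : EuclideanSpace ℂ (Fin n)) 1).exists_isMaxOn
      hne ((T ^ (n-1)).continuous.norm.continuousOn)
    have hx1 : ‖x‖ = 1 := mem_sphere_zero_iff_norm.mp hxS
    refine ⟨x, hx1, le_antisymm ?_ ?_⟩
    · calc ‖(T ^ (n-1)) x‖ ≤ ‖T ^ (n-1)‖ * ‖x‖ := (T ^ (n-1)).le_opNorm x
        _ = 1 := by rw [hT1, hx1, mul_one]
    · rw [← hT1]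
      apply (T ^ (n-1)).opNorm_le_bound (norm_nonneg _)
      intro y
      rcases eq_or_ne y 0 with rfl | hy0
      · simp
      have hyn : ‖y‖ ≠ 0 := norm_ne_zero_iff.mpr hy0
      have hmem : ((‖y‖⁻¹ : ℝ) : ℂ) • y ∈ Metric.sphere (0 : EuclideanSpace ℂ (Fin n)) 1 := by
        rw [mem_sphere_zero_iff_norm, norm_smul, Complex.norm_real, Real.norm_eq_abs,
          abs_of_nonneg (by positivity), inv_mul_cancel₀ hyn]
      have hmax' := hmax hmem
      simp only [Set.mem_setOf_eq, _root_.map_smul, norm_smul, Complex.norm_real,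
        Real.norm_eq_abs] at hmax'
      rw [abs_of_nonneg (show (0:ℝ) ≤ ‖y‖⁻¹ by positivity)] at hmax'
      calc ‖(T ^ (n-1)) y‖ = ‖y‖ * (‖y‖⁻¹ * ‖(T ^ (n-1)) y‖) := by field_simp
        _ ≤ ‖y‖ * ‖(T ^ (n-1)) x‖ := mul_le_mul_of_nonneg_left hmax' (norm_nonneg _)
        _ = ‖(T ^ (n-1)) x‖ * ‖y‖ := mul_comm _ _
  haveI : Nontrivial (EuclideanSpace ℂ (Fin n)) := by
    refine nontrivial_of_ne x 0 ?_
    intro hc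
    rw [hc, norm_zero] at hx1
    norm_num at hx1
  have f1 : ∀ k : ℕ, ‖T ^ k‖ ≤ 1 := by
    intro k
    induction k with
    | zero => rw [pow_zero]; exact le_of_eq norm_one
    | succ k ih =>
      calc ‖T ^ (k+1)‖ = ‖T ^ k * T‖ := by rw [pow_succ]
        _ ≤ ‖T ^ k‖ * ‖T‖ := norm_mul_le _ _
        _ ≤ 1 * 1 := mul_le_mul ih hT (norm_nonneg _) zero_le_one
        _ = 1 := one_mul 1
  have f2 : ∀ k : ℕ, k ≤ n - 1 → ‖(T ^ k) x‖ = 1 := by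
    intro k hk
    refine le_antisymm ?_ ?_
    · calc ‖(T ^ k) x‖ ≤ ‖T ^ k‖ * ‖x‖ := (T ^ k).le_opNorm x
        _ ≤ 1 := by rw [hx1, mul_one]; exact f1 k
    · have hsplit : T ^ (n-1) = T ^ (n-1-k) * T ^ k := by
        rw [← pow_add]; congr 1; omega
      calc (1:ℝ) = ‖(T ^ (n-1)) x‖ := hTx.symm
        _ = ‖(T ^ (n-1-k)) ((T ^ k) x)‖ := by rw [hsplit, ContinuousLinearMap.mul_apply]
        _ ≤ ‖T ^ (n-1-k)‖ * ‖(T ^ k) x‖ := (T ^ (n-1-k)).le_opNorm _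
        _ ≤ 1 * ‖(T ^ k) x‖ := mul_le_mul_of_nonneg_right (f1 _) (norm_nonneg _)
        _ = ‖(T ^ k) x‖ := one_mul _
  have f3 : ∀ k : ℕ, k + 1 ≤ n - 1 →
      ContinuousLinearMap.adjoint T ((T ^ (k+1)) x) = (T ^ k) x := by
    intro k hk
    have h1 : (T ^ (k+1)) x = T ((T ^ k) x) := by
      rw [pow_succ']; rfl
    rw [h1]
    apply contraction_isometry_vec T hT
    rw [← h1, f2 (k+1) hk, f2 k (by omega)]
  have f4 : ∀ m : ℕ, ∀ i j : ℕ, i < j → j + m = n → ⟪(T ^ i) x, (T ^ j) x⟫_ℂ = 0 := by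
    intro m
    induction m with
    | zero =>
      intro i j hij hjm
      rw [add_zero] at hjm
      subst hjm
      rw [hTn]
      simp
    | succ m ih =>
      intro i j hij hjm
      have hi1 : i + 1 ≤ n - 1 := by omega
      calc ⟪(T ^ i) x, (T ^ j) x⟫_ℂ
          = ⟪ContinuousLinearMap.adjoint T ((T ^ (i+1)) x), (T ^ j) x⟫_ℂ := by rw [f3 i hi1]
        _ = ⟪(T ^ (i+1)) x, T ((T ^ j) x)⟫_ℂ := ContinuousLinearMap.adjoint_inner_left T _ _
        _ = ⟪(T ^ (i+1)) x, (T ^ (j+1)) x⟫_ℂ := by rw [pow_succ' T j]; rfl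
        _ = 0 := ih (i+1) (j+1) (by omega) (by omega)
  set v : Fin n → EuclideanSpace ℂ (Fin n) := fun k => (T ^ (n - 1 - (k : ℕ))) x with hv
  have orth : Orthonormal ℂ v := by
    rw [orthonormal_iff_ite]
    intro i j
    by_cases hij : i = j
    · subst hij
      rw [if_pos rfl, hv]
      simp only
      rw [inner_self_eq_norm_sq_to_K, f2 (n - 1 - (i:ℕ)) (by omega)]
      norm_num
    · rw [if_neg hij]
      have hne : n - 1 - (i:ℕ) ≠ n - 1 - (j:ℕ) := by
        have h1 := i.isLt
        have h2 := j.isLt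
        intro hc
        exact hij (Fin.ext (by omega))
      rcases lt_or_gt_of_ne hne with hlt | hgt
      · exact f4 (n - (n - 1 - (j:ℕ))) _ _ hlt (by omega)
      · rw [← inner_conj_symm]
        rw [f4 (n - (n - 1 - (i:ℕ))) _ _ hgt (by omega)]
        simp
  haveI : Nonempty (Fin n) := ⟨⟨0, hn⟩⟩
  have hcard : Fintype.card (Fin n) = Module.finrank ℂ (EuclideanSpace ℂ (Fin n)) := by
    simp [finrank_euclideanSpace]
  set bas := basisOfLinearIndependentOfCardEqFinrank orth.linearIndependent hcard with hbasdef
  have hbas : ⇑bas = v := coe_basisOfLinearIndependentOfCardEqFinrank _ _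
  set ob := bas.toOrthonormalBasis (by rwa [hbas]) with hobdef
  have hobB : ob.toBasis = bas := Module.Basis.toBasis_toOrthonormalBasis _ _
  -- matrix of T in basis ob is shiftM n
  have hmat : LinearMap.toMatrix ob.toBasis ob.toBasis (Matrix.toEuclideanLin B) = shiftM n := by
    ext i j
    rw [LinearMap.toMatrix_apply, hobB, hbas]
    have hTv : Matrix.toEuclideanLin B (v j) = T (v j) := rfl
    by_cases hj0 : (j : ℕ) = 0
    · have hmul : T * T ^ (n-1) = T ^ n := by
        rw [← pow_succ']
        congr 1
        omega
      have : T (v j) = 0 := by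
        have h2 := congrArg
          (fun S : EuclideanSpace ℂ (Fin n) →L[ℂ] EuclideanSpace ℂ (Fin n) => S x) hmul
        simp only [ContinuousLinearMap.mul_apply] at h2
        rw [hv]
        simp only [hj0, Nat.sub_zero]
        rw [h2, hTn]
        rfl
      rw [hTv, this, map_zero]
      simp only [Finsupp.coe_zero, Pi.zero_apply, shiftM, Matrix.of_apply]
      rw [if_neg (by omega)]
    · have hjlt : (j : ℕ) - 1 < n := by omega
      set j' : Fin n := ⟨(j : ℕ) - 1, hjlt⟩ with hj'
      have hstep : T (v j) = v j' := by
        rw [hv]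
        simp only
        have : T ((T ^ (n - 1 - (j:ℕ))) x) = (T ^ (n - 1 - ((j:ℕ) - 1))) x := by
          have harith : n - 1 - ((j:ℕ) - 1) = (n - 1 - (j:ℕ)) + 1 := by omega
          rw [harith, pow_succ' T]
          rfl
        exact this
      rw [hTv, hstep, ← hbas, bas.repr_self]
      rw [Finsupp.single_apply]
      simp only [shiftM, Matrix.of_apply]
      by_cases hcase : j' = i
      · have hval : (j:ℕ) - 1 = (i:ℕ) := congrArg Fin.val hcase
        rw [if_pos hcase, if_pos (by omega)]
      · rw [if_neg hcase, if_neg ?_]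
        intro hc
        apply hcase
        exact Fin.ext (show (j:ℕ) - 1 = (i:ℕ) by omega)
  -- base change
  set e := EuclideanSpace.basisFun (Fin n) ℂ with he
  have hBmat : LinearMap.toMatrix e.toBasis e.toBasis (Matrix.toEuclideanLin B) = B := by
    rw [Matrix.toEuclideanLin_eq_toLin_orthonormal, LinearMap.toMatrix_toLin]
  set U := ob.toBasis.toMatrix ⇑e.toBasis with hUdef
  have hU : U ∈ Matrix.unitaryGroup (Fin n) ℂ := by
    have := ob.toMatrix_orthonormalBasis_mem_unitary e
    rwa [hUdef, OrthonormalBasis.coe_toBasis]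
  set W := e.toBasis.toMatrix ⇑ob.toBasis with hWdef
  have hUW : U * W = 1 := Module.Basis.toMatrix_mul_toMatrix_flip _ _
  have hW : W = star U := by
    have h1 : star U * U = 1 := (Matrix.mem_unitaryGroup_iff'.mp hU)
    calc W = 1 * W := (one_mul W).symm
      _ = (star U * U) * W := by rw [h1]
      _ = star U * (U * W) := by rw [mul_assoc]
      _ = star U := by rw [hUW, mul_one]
  have hconj := basis_toMatrix_mul_linearMap_toMatrix_mul_basis_toMatrix
    e.toBasis ob.toBasis e.toBasis ob.toBasis (Matrix.toEuclideanLin B)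
  refine ⟨U, hU, ?_⟩
  rw [← hBmat, ← hconj, hmat, ← hWdef, ← hUdef, hW]


lemma conj_pow' {n : ℕ} (U S : Matrix (Fin n) (Fin n) ℂ) (hU : U ∈ Matrix.unitaryGroup (Fin n) ℂ)
    (k : ℕ) : (star U * S * U) ^ k = star U * S ^ k * U := by
  have h1 : star U * U = 1 := Matrix.mem_unitaryGroup_iff'.mp hU
  have h2 : U * star U = 1 := Matrix.mem_unitaryGroup_iff.mp hU
  induction k with
  | zero => rw [pow_zero, pow_zero, mul_one, h1]
  | succ k ih =>
    rw [pow_succ, pow_succ, ih]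
    simp only [mul_assoc]
    rw [← mul_assoc U (star U) (S * U), h2, one_mul]
lemma aeval_conj {n : ℕ} (U S : Matrix (Fin n) (Fin n) ℂ)
    (hU : U ∈ Matrix.unitaryGroup (Fin n) ℂ) (p : Polynomial ℂ) :
    aeval (star U * S * U) p = star U * (aeval S p) * U := by
  induction p using Polynomial.induction_on' with
  | add p q hp hq => rw [map_add, map_add, hp, hq, mul_add, add_mul]
  | monomial k a =>
    rw [aeval_monomial, aeval_monomial, conj_pow' U S hU k]
    simp only [← mul_assoc]
    rw [Algebra.commutes a (star U)]

lemma aeval_shiftM (n m : ℕ) (hnm : n ≤ m) (z : ℕ → ℂ) (i j : Fin n) :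
    aeval (shiftM n) (∑ k ∈ Finset.range m, C (z k) * X ^ k) i j =
      if (i : ℕ) ≤ (j : ℕ) then z ((j : ℕ) - (i : ℕ)) else 0 := by
  rw [map_sum]
  have hterm : ∀ k : ℕ, aeval (shiftM n) (C (z k) * X ^ k) = z k • (shiftM n ^ k) := by
    intro k
    rw [_root_.map_mul, aeval_C, map_pow, aeval_X, ← Algebra.smul_def]
  simp only [hterm]
  rw [Matrix.sum_apply]
  simp only [Matrix.smul_apply, shiftM_pow, Matrix.of_apply, smul_eq_mul, mul_ite, mul_one,
    mul_zero]
  by_cases hij : (i : ℕ) ≤ (j : ℕ)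
  · rw [Finset.sum_eq_single ((j : ℕ) - (i : ℕ)), if_pos (by omega), if_pos hij]
    · intro k _ hk
      rw [if_neg (by omega)]
    · intro hmem
      exact absurd (Finset.mem_range.mpr (by have := j.isLt; omega)) hmem
  · rw [Finset.sum_eq_zero, if_neg hij]
    intro k _
    rw [if_neg (by omega)]

/-- If `R` is an upper triangular Toeplitz matrix with `z 1 ≠ 0`, and `A` satisfies
`‖f(A)‖ = ‖f(R)‖` for every polynomial `f`, then `A` is unitarily similar to `R`. -/
theorem toeplitz_unitary_similarity
    (n : ℕ) (hn : 1 ≤ n) (z : ℕ → ℂ) (hz : z 1 ≠ 0)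
    (R : Matrix (Fin n) (Fin n) ℂ)
    (hR : ∀ i j : Fin n, R i j = if (i : ℕ) ≤ (j : ℕ) then z ((j : ℕ) - (i : ℕ)) else 0)
    (A : Matrix (Fin n) (Fin n) ℂ)
    (h : ∀ f : Polynomial ℂ, opNorm (aeval A f) = opNorm (aeval R f)) :
    ∃ U : Matrix (Fin n) (Fin n) ℂ, U ∈ Matrix.unitaryGroup (Fin n) ℂ ∧
      A = star U * R * U := by
  have hSn : shiftM n ^ n = 0 := shiftM_pow_n n
  set r : Polynomial ℂ := ∑ k ∈ Finset.range (max n 2), C (z k) * X ^ k with hr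
  have hSr : aeval (shiftM n) r = R := by
    ext i j
    rw [hr, aeval_shiftM n (max n 2) (le_max_left n 2) z i j, hR i j]
  have hr1 : r.coeff 1 = z 1 := by
    rw [hr]
    simp only [Polynomial.finset_sum_coeff, Polynomial.coeff_C_mul, Polynomial.coeff_X_pow,
      mul_ite, mul_one, mul_zero]
    rw [Finset.sum_ite_eq (Finset.range (max n 2)) 1 z, if_pos]
    exact Finset.mem_range.mpr (by omega)
  obtain ⟨q, u, hu⟩ := exists_comp_inverse r (hr1 ▸ hz) n hn
  have hqr : q.comp r = X + X ^ n * u := by rw [← hu]; ring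
  have hRq : aeval R q = shiftM n := by
    rw [← hSr, ← Polynomial.aeval_comp, hqr, map_add, _root_.map_mul, map_pow, aeval_X, hSn,
      zero_mul, add_zero]
  set B := aeval A q with hB
  have hBp : ∀ p : Polynomial ℂ, opNorm (aeval B p) = opNorm (aeval (shiftM n) p) := by
    intro p
    rw [hB, ← Polynomial.aeval_comp, h (p.comp q), Polynomial.aeval_comp, hRq]
  have hop0 : opNorm (0 : Matrix (Fin n) (Fin n) ℂ) = 0 := by
    rw [opNorm, map_zero, norm_zero]
  have hBle : opNorm B ≤ 1 := by
    have h1 := hBp X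
    rw [aeval_X, aeval_X] at h1
    rw [h1, ← pow_one (shiftM n)]
    exact opNorm_shift_pow_le_one n 1
  have hBn : B ^ n = 0 := by
    apply opNorm_eq_zero
    have h1 := hBp (X ^ n)
    rw [map_pow, map_pow, aeval_X, aeval_X] at h1
    rw [h1, hSn, hop0]
  have hB1 : opNorm (B ^ (n - 1)) = 1 := by
    have h1 := hBp (X ^ (n - 1))
    rw [map_pow, map_pow, aeval_X, aeval_X] at h1
    rw [h1]
    exact opNorm_shift_pow_eq_one n (n - 1) (by omega)
  obtain ⟨U, hU, hBU⟩ := key_unitary n hn B hBle hBn hB1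
  have hAs : aeval A (r.comp q) = A := by
    have h0 : aeval R (r.comp q - X) = 0 := by
      rw [map_sub, Polynomial.aeval_comp, hRq, hSr, aeval_X, sub_self]
    have h1 : aeval A (r.comp q - X) = 0 := by
      apply opNorm_eq_zero
      rw [h (r.comp q - X), h0, hop0]
    rw [map_sub, aeval_X, sub_eq_zero] at h1
    exact h1
  have hArB : A = aeval B r := by rw [hB, ← Polynomial.aeval_comp, hAs]
  refine ⟨U, hU, ?_⟩
  rw [hArB, hBU, aeval_conj U (shiftM n) hU r, hSr]
end

section
/- Let UpperToepl_n ⊆ M_n(ℂ) be the (unital, abelian) algebra of all upper triangular Toeplitz matrices. If ϱ : UpperToepl_n → M_n(ℂ) is a unital algebra homomorphism such that ‖ϱ(X)‖ = ‖X‖ for every X ∈ UpperToepl_n, then there exists a unitary U ∈ M_n(ℂ) such that ϱ(X) = U*XU for every X ∈ UpperToepl_n. -/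
open Polynomial Matrix

/-- `R` is an upper triangular Toeplitz matrix: `R i j = z (j - i)` for `i ≤ j`
and `R i j = 0` for `j < i`. -/
def IsUpperToeplitz {n : ℕ} (R : Matrix (Fin n) (Fin n) ℂ) : Prop :=
  ∃ z : ℕ → ℂ, ∀ i j : Fin n,
    R i j = if (i : ℕ) ≤ (j : ℕ) then z ((j : ℕ) - (i : ℕ)) else 0

variable {n : ℕ}

/-- The upper shift (Jordan nilpotent) matrix. -/
def Nmat (n : ℕ) : Matrix (Fin n) (Fin n) ℂ :=
  Matrix.of fun i j => if (j : ℕ) = (i : ℕ) + 1 then 1 else 0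

lemma Nmat_pow_apply (k : ℕ) (i j : Fin n) :
    (Nmat n ^ k) i j = if (j : ℕ) = (i : ℕ) + k then 1 else 0 := by
  induction k generalizing i j with
  | zero =>
    simp [Matrix.one_apply, Fin.ext_iff, eq_comm]
  | succ k ih =>
    rw [pow_succ, Matrix.mul_apply]
    rcases eq_or_ne ((j : ℕ)) ((i : ℕ) + (k + 1)) with h | h
    · have hik : (i : ℕ) + k < n := by omega
      rw [Finset.sum_eq_single (⟨(i : ℕ) + k, hik⟩ : Fin n)]
      · rw [ih]; simp [Nmat, h]; omega
      · intro l _ hl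
        rw [ih]
        have : (l : ℕ) ≠ (i : ℕ) + k := by
          intro hc; exact hl (Fin.ext hc)
        simp [this]
      · simp
    · rw [if_neg h]
      apply Finset.sum_eq_zero
      intro l _
      rw [ih]
      by_cases hl : (l : ℕ) = (i : ℕ) + k
      · have : (j : ℕ) ≠ (l : ℕ) + 1 := by omega
        simp [Nmat, this]
      · simp [hl]

lemma toepl_Nmat_pow (k : ℕ) : IsUpperToeplitz (Nmat n ^ k) := by
  refine ⟨fun d => if d = k then 1 else 0, fun i j => ?_⟩
  rw [Nmat_pow_apply]
  rcases Nat.lt_or_ge (j : ℕ) (i : ℕ) with h | h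
  · rw [if_neg (by omega), if_neg (by omega)]
  · rw [if_pos h]
    by_cases hd : (j : ℕ) - (i : ℕ) = k
    · rw [if_pos (by omega)]; simp [hd]
    · rw [if_neg (by omega)]; simp [hd]

lemma toepl_add {X Y : Matrix (Fin n) (Fin n) ℂ} (hX : IsUpperToeplitz X)
    (hY : IsUpperToeplitz Y) : IsUpperToeplitz (X + Y) := by
  obtain ⟨z, hz⟩ := hX; obtain ⟨w, hw⟩ := hY
  refine ⟨z + w, fun i j => ?_⟩
  simp only [Matrix.add_apply, hz, hw, Pi.add_apply]
  split <;> simp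

lemma toepl_smul (c : ℂ) {X : Matrix (Fin n) (Fin n) ℂ} (hX : IsUpperToeplitz X) :
    IsUpperToeplitz (c • X) := by
  obtain ⟨z, hz⟩ := hX
  refine ⟨c • z, fun i j => ?_⟩
  simp only [Matrix.smul_apply, hz, Pi.smul_apply, smul_eq_mul]
  split <;> simp

lemma toepl_zero : IsUpperToeplitz (0 : Matrix (Fin n) (Fin n) ℂ) :=
  ⟨0, fun i j => by simp⟩

lemma toepl_sum (z : ℕ → ℂ) (s : Finset ℕ) :
    IsUpperToeplitz (∑ k ∈ s, z k • Nmat n ^ k) := by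
  classical
  induction s using Finset.induction with
  | empty => simpa using toepl_zero
  | insert _ _ hk ih =>
    rw [Finset.sum_insert hk]
    exact toepl_add (toepl_smul _ (toepl_Nmat_pow _)) ih

lemma toepl_repr {X : Matrix (Fin n) (Fin n) ℂ} (hX : IsUpperToeplitz X) :
    ∃ z : ℕ → ℂ, X = ∑ k ∈ Finset.range n, z k • Nmat n ^ k := by
  obtain ⟨z, hz⟩ := hX
  refine ⟨z, ?_⟩
  ext i j
  rw [hz, Matrix.sum_apply]
  simp only [Matrix.smul_apply, Nmat_pow_apply, smul_eq_mul]
  rcases Nat.lt_or_ge (j : ℕ) (i : ℕ) with h | h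
  · rw [if_neg (by omega)]
    refine (Finset.sum_eq_zero fun k _ => ?_).symm
    rw [if_neg (by omega), mul_zero]
  · rw [if_pos h]
    rw [Finset.sum_eq_single_of_mem ((j : ℕ) - (i : ℕ))
      (Finset.mem_range.2 (by omega))]
    · rw [if_pos (by omega), mul_one]
    · intro k _ hk
      rw [if_neg (by omega), mul_zero]

lemma Nmat_pow_n : Nmat n ^ n = 0 := by
  ext i j
  rw [Nmat_pow_apply]
  rw [if_neg (by omega)]
  rfl

lemma phi_apply (A : Matrix (Fin n) (Fin n) ℂ) (v : EuclideanSpace ℂ (Fin n)) (i : Fin n) :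
    (Matrix.toEuclideanCLM (𝕜 := ℂ) A) v i = ∑ j, A i j * v j := rfl

lemma Nk_coord (k : ℕ) (v : EuclideanSpace ℂ (Fin n)) (i : Fin n) :
    (Matrix.toEuclideanCLM (𝕜 := ℂ) (Nmat n ^ k)) v i =
      if h : (i : ℕ) + k < n then v ⟨(i : ℕ) + k, h⟩ else 0 := by
  rw [phi_apply]
  split
  next h =>
    rw [Finset.sum_eq_single (⟨(i : ℕ) + k, h⟩ : Fin n)]
    · rw [Nmat_pow_apply, if_pos rfl, one_mul]
    · intro l _ hl
      rw [Nmat_pow_apply, if_neg (fun hc => hl (Fin.ext hc)), zero_mul]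
    · simp
  next h =>
    apply Finset.sum_eq_zero
    intro l _
    rw [Nmat_pow_apply, if_neg (by omega), zero_mul]

lemma shift_sum_le (k : ℕ) (f : Fin n → ℝ) (hf : ∀ j, 0 ≤ f j) :
    (∑ i : Fin n, if h : (i : ℕ) + k < n then f ⟨(i : ℕ) + k, h⟩ else 0) ≤ ∑ j : Fin n, f j := by
  have step : ∀ i : Fin n, (if h : (i : ℕ) + k < n then f ⟨(i : ℕ) + k, h⟩ else 0)
      = ∑ j : Fin n, if (j : ℕ) = (i : ℕ) + k then f j else 0 := by
    intro i
    split
    next h =>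
      rw [Finset.sum_eq_single (⟨(i : ℕ) + k, h⟩ : Fin n)]
      · rw [if_pos rfl]
      · intro l _ hl
        rw [if_neg (fun hc => hl (Fin.ext hc))]
      · simp
    next h =>
      refine (Finset.sum_eq_zero fun j _ => ?_).symm
      rw [if_neg (by omega)]
  rw [Finset.sum_congr rfl fun i _ => step i, Finset.sum_comm]
  refine Finset.sum_le_sum fun j _ => ?_
  rcases Nat.lt_or_ge (j : ℕ) k with h | h
  · refine le_of_eq_of_le (Finset.sum_eq_zero fun i _ => ?_) (hf j)
    rw [if_neg (by omega)]
  · have hjk : (j : ℕ) - k < n := by omega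
    rw [Finset.sum_eq_single (⟨(j : ℕ) - k, hjk⟩ : Fin n)]
    · rw [if_pos (by simp; omega)]
    · intro l _ hl
      exact if_neg fun hc => hl (Fin.ext (show (l : ℕ) = (j : ℕ) - k by omega))
    · simp

lemma norm_sq_eq (x : EuclideanSpace ℂ (Fin n)) : ‖x‖ ^ 2 = ∑ i, ‖x i‖ ^ 2 := by
  rw [EuclideanSpace.norm_eq, Real.sq_sqrt (Finset.sum_nonneg fun i _ => sq_nonneg _)]

lemma norm_phiNk_apply_le (k : ℕ) (v : EuclideanSpace ℂ (Fin n)) :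
    ‖(Matrix.toEuclideanCLM (𝕜 := ℂ) (Nmat n ^ k)) v‖ ≤ ‖v‖ := by
  have h2 : ‖(Matrix.toEuclideanCLM (𝕜 := ℂ) (Nmat n ^ k)) v‖ ^ 2 ≤ ‖v‖ ^ 2 := by
    rw [norm_sq_eq, norm_sq_eq]
    have : ∀ i : Fin n, ‖(Matrix.toEuclideanCLM (𝕜 := ℂ) (Nmat n ^ k)) v i‖ ^ 2
        = if h : (i : ℕ) + k < n then ‖v ⟨(i : ℕ) + k, h⟩‖ ^ 2 else 0 := by
      intro i
      rw [Nk_coord]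
      split <;> simp
    rw [Finset.sum_congr rfl fun i _ => this i]
    exact shift_sum_le k (fun j => ‖v j‖ ^ 2) fun j => sq_nonneg _
  have h3 := Real.sqrt_le_sqrt h2
  rwa [Real.sqrt_sq (norm_nonneg _), Real.sqrt_sq (norm_nonneg _)] at h3

lemma opNorm_Nk_le (k : ℕ) : ‖Matrix.toEuclideanCLM (𝕜 := ℂ) (Nmat n ^ k)‖ ≤ 1 := by
  refine ContinuousLinearMap.opNorm_le_bound _ zero_le_one fun v => ?_
  rw [one_mul]
  exact norm_phiNk_apply_le k v

lemma opNorm_Nk_eq (k : ℕ) (hk : k < n) :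
    ‖Matrix.toEuclideanCLM (𝕜 := ℂ) (Nmat n ^ k)‖ = 1 := by
  have hn : 0 < n := by omega
  refine le_antisymm (opNorm_Nk_le k) ?_
  have himg : (Matrix.toEuclideanCLM (𝕜 := ℂ) (Nmat n ^ k))
      (EuclideanSpace.single ⟨n - 1, by omega⟩ 1) =
      EuclideanSpace.single ⟨n - 1 - k, by omega⟩ (1 : ℂ) := by
    ext i
    rw [Nk_coord, EuclideanSpace.single_apply]
    split
    next h =>
      rw [EuclideanSpace.single_apply]
      by_cases hc : (i : ℕ) + k = n - 1
      · rw [if_pos (Fin.ext (by simpa using hc)), if_pos (Fin.ext (by simp; omega))]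
      · rw [if_neg (fun hcc => hc (by simpa using Fin.ext_iff.1 hcc)),
          if_neg (fun hcc => hc (by have := Fin.ext_iff.1 hcc; simp at this; omega))]
    next h =>
      rw [if_neg (fun hcc => by have := Fin.ext_iff.1 hcc; simp at this; omega)]
  have h1 : ‖(Matrix.toEuclideanCLM (𝕜 := ℂ) (Nmat n ^ k))
      (EuclideanSpace.single (⟨n - 1, by omega⟩ : Fin n) 1)‖ = 1 := by
    rw [himg, EuclideanSpace.norm_single, norm_one]
  have h2 := (Matrix.toEuclideanCLM (𝕜 := ℂ) (Nmat n ^ k)).le_opNorm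
      (EuclideanSpace.single (⟨n - 1, by omega⟩ : Fin n) 1)
  rw [h1, EuclideanSpace.norm_single, norm_one, mul_one] at h2
  exact h2

lemma pair_le (v : EuclideanSpace ℂ (Fin n)) {i j : Fin n} (hij : i ≠ j) :
    ‖v i‖ ^ 2 + ‖v j‖ ^ 2 ≤ ‖v‖ ^ 2 := by
  rw [norm_sq_eq]
  have : ‖v i‖ ^ 2 + ‖v j‖ ^ 2 = ∑ k ∈ ({i, j} : Finset (Fin n)), ‖v k‖ ^ 2 :=
    (Finset.sum_pair (f := fun k => ‖v k‖ ^ 2) hij).symm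
  rw [this]
  exact Finset.sum_le_sum_of_subset_of_nonneg (Finset.subset_univ _)
    fun k _ _ => sq_nonneg _

lemma single_coord_le (v : EuclideanSpace ℂ (Fin n)) (j : Fin n) : ‖v j‖ ^ 2 ≤ ‖v‖ ^ 2 := by
  rw [norm_sq_eq]
  exact Finset.single_le_sum (f := fun k => ‖v k‖ ^ 2) (fun k _ => sq_nonneg _) (Finset.mem_univ j)

lemma phiN_last (hn : 0 < n) (v : EuclideanSpace ℂ (Fin n)) :
    (Matrix.toEuclideanCLM (𝕜 := ℂ) (Nmat n ^ (n - 1))) v =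
      EuclideanSpace.single ⟨0, hn⟩ (v ⟨n - 1, by omega⟩) := by
  ext i
  rw [Nk_coord, EuclideanSpace.single_apply]
  split
  next h =>
    have hi0 : i = ⟨0, hn⟩ := Fin.ext (by simp; omega)
    rw [if_pos hi0]
    apply congrArg
    exact Fin.ext (by simp [hi0])
  next h =>
    rw [if_neg (fun hc => by subst hc; simp at h; omega)]

-- inner product of N^a v with N^{n-1} v
lemma inner_Na_Nlast (a : ℕ) (ha : a < n) (v : EuclideanSpace ℂ (Fin n)) :
    (inner ℂ ((Matrix.toEuclideanCLM (𝕜 := ℂ) (Nmat n ^ a)) v)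
      ((Matrix.toEuclideanCLM (𝕜 := ℂ) (Nmat n ^ (n - 1))) v) : ℂ) =
      (starRingEnd ℂ) (v ⟨a, ha⟩) * v ⟨n - 1, by omega⟩ := by
  have hn : 0 < n := by omega
  rw [phiN_last hn, PiLp.inner_apply]
  rw [Finset.sum_eq_single (⟨0, hn⟩ : Fin n)]
  · rw [EuclideanSpace.single_apply, if_pos rfl]
    rw [Nk_coord, dif_pos (by simpa using ha)]
    rw [RCLike.inner_apply']
    congr 2
    apply congrArg
    apply Fin.ext
    show ((⟨0, hn⟩ : Fin n) : ℕ) + a = a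
    simp
  · intro i _ hi
    rw [EuclideanSpace.single_apply, if_neg hi]
    simp
  · simp

lemma key_bound (a : ℕ) (ha : a + 1 < n) (lam : ℂ) (v : EuclideanSpace ℂ (Fin n)) :
    ‖(Matrix.toEuclideanCLM (𝕜 := ℂ) (Nmat n ^ a + lam • Nmat n ^ (n - 1))) v‖ ^ 2 ≤
      (2 + ‖lam‖ ^ 2) * ‖v‖ ^ 2 := by
  have hn : 0 < n := by omega
  set φ := Matrix.toEuclideanCLM (n := Fin n) (𝕜 := ℂ)
  have hmap : φ (Nmat n ^ a + lam • Nmat n ^ (n - 1)) =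
      φ (Nmat n ^ a) + lam • φ (Nmat n ^ (n - 1)) := by
    rw [map_add, _root_.map_smul]
  rw [hmap]
  rw [ContinuousLinearMap.add_apply, ContinuousLinearMap.smul_apply]
  set u := φ (Nmat n ^ a) v with hu
  set w := φ (Nmat n ^ (n - 1)) v with hw
  have hva : (a : ℕ) < n := by omega
  have expand : ‖u + lam • w‖ ^ 2 = ‖u‖ ^ 2 + 2 * Complex.re (lam * (inner ℂ u w : ℂ))
      + ‖lam‖ ^ 2 * ‖w‖ ^ 2 := by
    rw [norm_add_sq (𝕜 := ℂ), inner_smul_right, norm_smul, mul_pow]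
    simp only [RCLike.re_to_complex]
    try ring
  rw [expand]
  have hinner : (inner ℂ u w : ℂ) = (starRingEnd ℂ) (v ⟨a, hva⟩) * v ⟨n - 1, by omega⟩ :=
    inner_Na_Nlast a hva v
  have hwnorm : ‖w‖ = ‖v ⟨n - 1, by omega⟩‖ := by
    rw [hw, phiN_last hn, EuclideanSpace.norm_single]
  set α := ‖v (⟨a, hva⟩ : Fin n)‖
  set β := ‖v (⟨n - 1, by omega⟩ : Fin n)‖
  have hre : Complex.re (lam * (inner ℂ u w : ℂ)) ≤ ‖lam‖ * (α * β) := by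
    calc Complex.re (lam * (inner ℂ u w : ℂ)) ≤ ‖lam * (inner ℂ u w : ℂ)‖ :=
          Complex.re_le_norm _
      _ = ‖lam‖ * (α * β) := by
          rw [norm_mul, hinner, norm_mul]
          simp [α, β]
  have hαβ : α ^ 2 + β ^ 2 ≤ ‖v‖ ^ 2 := by
    refine pair_le v ?_
    intro hc
    have := Fin.ext_iff.1 hc
    simp at this
    omega
  have hβ : β ^ 2 ≤ ‖v‖ ^ 2 := single_coord_le v _
  have hunorm : ‖u‖ ^ 2 ≤ ‖v‖ ^ 2 := by
    have := norm_phiNk_apply_le (n := n) a v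
    have h2 : (0:ℝ) ≤ ‖v‖ := norm_nonneg _
    nlinarith [norm_nonneg u]
  have hamgm : 2 * (‖lam‖ * (α * β)) ≤ ‖lam‖ ^ 2 * α ^ 2 + β ^ 2 := by
    nlinarith [sq_nonneg (‖lam‖ * α - β)]
  rw [hwnorm]
  nlinarith [norm_nonneg lam, sq_nonneg ‖lam‖]

lemma exists_norm_attained (hn : 0 < n)
    (T : EuclideanSpace ℂ (Fin n) →L[ℂ] EuclideanSpace ℂ (Fin n)) :
    ∃ x : EuclideanSpace ℂ (Fin n), ‖x‖ = 1 ∧ ‖T x‖ = ‖T‖ := by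
  have hne : (Metric.sphere (0 : EuclideanSpace ℂ (Fin n)) 1).Nonempty := by
    refine ⟨EuclideanSpace.single ⟨0, hn⟩ 1, ?_⟩
    simp [EuclideanSpace.norm_single]
  have hcpt : IsCompact (Metric.sphere (0 : EuclideanSpace ℂ (Fin n)) 1) :=
    isCompact_sphere _ _
  have hcont : Continuous fun v : EuclideanSpace ℂ (Fin n) => ‖T v‖ :=
    T.continuous.norm
  obtain ⟨x, hx, hmax⟩ := hcpt.exists_isMaxOn hne hcont.continuousOn
  have hx1 : ‖x‖ = 1 := by simpa using hx
  refine ⟨x, hx1, le_antisymm ?_ ?_⟩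
  · calc ‖T x‖ ≤ ‖T‖ * ‖x‖ := T.le_opNorm x
      _ = ‖T‖ := by rw [hx1, mul_one]
  · refine ContinuousLinearMap.opNorm_le_bound _ (norm_nonneg _) fun v => ?_
    rcases eq_or_ne v 0 with rfl | hv
    · simp
    · have hvn : ‖v‖ ≠ 0 := norm_ne_zero_iff.2 hv
      have hnc : ‖((‖v‖ : ℂ))⁻¹‖ = ‖v‖⁻¹ := by
        simp [norm_inv, Complex.norm_real, Real.norm_eq_abs, abs_of_nonneg (norm_nonneg v)]
      have hmem : (((‖v‖ : ℂ))⁻¹ • v) ∈ Metric.sphere (0 : EuclideanSpace ℂ (Fin n)) 1 := by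
        rw [Metric.mem_sphere, dist_zero_right, norm_smul, hnc,
          inv_mul_cancel₀ hvn]
      have h2 : ‖T (((‖v‖ : ℂ))⁻¹ • v)‖ ≤ ‖T x‖ := hmax hmem
      rw [_root_.map_smul, norm_smul, hnc] at h2
      have h3 : ‖v‖⁻¹ * ‖T v‖ ≤ ‖T x‖ := h2
      calc ‖T v‖ = ‖v‖ * (‖v‖⁻¹ * ‖T v‖) := by field_simp
        _ ≤ ‖v‖ * ‖T x‖ := by
            exact mul_le_mul_of_nonneg_left h3 (norm_nonneg v)
        _ = ‖T x‖ * ‖v‖ := mul_comm _ _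

lemma inner_preserved {T : EuclideanSpace ℂ (Fin n) →L[ℂ] EuclideanSpace ℂ (Fin n)}
    (hT : ‖T‖ ≤ 1) {u : EuclideanSpace ℂ (Fin n)} (hu : ‖T u‖ = ‖u‖)
    (w : EuclideanSpace ℂ (Fin n)) :
    (inner ℂ (T u) (T w) : ℂ) = inner ℂ u w := by
  set d : ℂ := (inner ℂ (T u) (T w) : ℂ) - inner ℂ u w with hd
  have key : ∀ s : ℂ, 2 * (s * d).re ≤ ‖s‖ ^ 2 * ‖w‖ ^ 2 := by
    intro s
    have hle : ‖T (u + s • w)‖ ≤ ‖u + s • w‖ := by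
      calc ‖T (u + s • w)‖ ≤ ‖T‖ * ‖u + s • w‖ := T.le_opNorm _
        _ ≤ 1 * ‖u + s • w‖ := by
            exact mul_le_mul_of_nonneg_right hT (norm_nonneg _)
        _ = ‖u + s • w‖ := one_mul _
    have hsq : ‖T (u + s • w)‖ ^ 2 ≤ ‖u + s • w‖ ^ 2 :=
      pow_le_pow_left₀ (norm_nonneg _) hle 2
    rw [_root_.map_add, _root_.map_smul] at hsq
    rw [norm_add_sq (𝕜 := ℂ), norm_add_sq (𝕜 := ℂ), inner_smul_right,
      inner_smul_right, norm_smul, norm_smul, mul_pow, mul_pow] at hsq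
    simp only [RCLike.re_to_complex] at hsq
    have hTw : ‖T w‖ ^ 2 ≤ ‖w‖ ^ 2 := by
      have h1 : ‖T w‖ ≤ ‖w‖ := by
        calc ‖T w‖ ≤ ‖T‖ * ‖w‖ := T.le_opNorm w
          _ ≤ 1 * ‖w‖ := mul_le_mul_of_nonneg_right hT (norm_nonneg _)
          _ = ‖w‖ := one_mul _
      exact pow_le_pow_left₀ (norm_nonneg _) h1 2
    have hmul : (s * d).re = (s * (inner ℂ (T u) (T w) : ℂ)).re
        - (s * (inner ℂ u w : ℂ)).re := by
      rw [hd, mul_sub, Complex.sub_re]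
    rw [hu] at hsq
    nlinarith [sq_nonneg ‖s‖, sq_nonneg ‖w‖]
  have hd0 : d = 0 := by
    by_contra hne
    have habs : (0:ℝ) < ‖d‖ ^ 2 := by
      have := norm_pos_iff.mpr hne
      positivity
    set ε : ℝ := (‖w‖ ^ 2 + 1)⁻¹ with hε
    have hεpos : 0 < ε := by positivity
    have := key ((ε : ℂ) * (starRingEnd ℂ) d)
    rw [mul_assoc] at this
    have hcd : (starRingEnd ℂ) d * d = ((‖d‖ ^ 2 : ℝ) : ℂ) := by
      rw [mul_comm, Complex.mul_conj, Complex.sq_norm]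
    rw [hcd] at this
    have hre : (((ε : ℂ)) * ((‖d‖ ^ 2 : ℝ) : ℂ)).re = ε * ‖d‖ ^ 2 := by
      rw [← Complex.ofReal_mul, Complex.ofReal_re]
    rw [hre] at this
    have hs : ‖(ε : ℂ) * (starRingEnd ℂ) d‖ ^ 2 = ε ^ 2 * ‖d‖ ^ 2 := by
      rw [norm_mul, mul_pow]
      simp [Complex.norm_real, Real.norm_eq_abs, abs_of_pos hεpos]
    rw [hs] at this
    have hεw : ε * ‖w‖ ^ 2 < 1 := by
      rw [hε]
      rw [inv_mul_lt_iff₀ (by positivity)]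
      nlinarith
    have hεA : 0 < ε * ‖d‖ ^ 2 := mul_pos hεpos habs
    have h6 : (ε * ‖d‖ ^ 2) * (ε * ‖w‖ ^ 2) < (ε * ‖d‖ ^ 2) * 1 :=
      mul_lt_mul_of_pos_left hεw hεA
    nlinarith
  rw [hd] at hd0
  exact sub_eq_zero.mp hd0

/-- If `ϱ` is a unital algebra homomorphism from the algebra `UpperToepl_n` of upper
triangular Toeplitz matrices into `M_n(ℂ)` such that `‖ϱ(X)‖ = ‖X‖` for every
`X ∈ UpperToepl_n`, then `ϱ` is implemented by a unitary: `ϱ(X) = U* X U`. -/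
theorem toeplitz_isometric_homomorphism_is_unitary_conjugation
    (n : ℕ) (hn : 1 ≤ n)
    (ϱ : Matrix (Fin n) (Fin n) ℂ → Matrix (Fin n) (Fin n) ℂ)
    (hone : ϱ 1 = 1)
    (hadd : ∀ X Y : Matrix (Fin n) (Fin n) ℂ, IsUpperToeplitz X → IsUpperToeplitz Y →
      ϱ (X + Y) = ϱ X + ϱ Y)
    (hmul : ∀ X Y : Matrix (Fin n) (Fin n) ℂ, IsUpperToeplitz X → IsUpperToeplitz Y →
      ϱ (X * Y) = ϱ X * ϱ Y)
    (hsmul : ∀ (c : ℂ) (X : Matrix (Fin n) (Fin n) ℂ), IsUpperToeplitz X →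
      ϱ (c • X) = c • ϱ X)
    (hnorm : ∀ X : Matrix (Fin n) (Fin n) ℂ, IsUpperToeplitz X → opNorm (ϱ X) = opNorm X) :
    ∃ U : Matrix (Fin n) (Fin n) ℂ, U ∈ Matrix.unitaryGroup (Fin n) ℂ ∧
      ∀ X : Matrix (Fin n) (Fin n) ℂ, IsUpperToeplitz X → ϱ X = star U * X * U := by
  classical
  have hn0 : 0 < n := hn
  set φ := Matrix.toEuclideanCLM (n := Fin n) (𝕜 := ℂ) with hφ
  set M : Matrix (Fin n) (Fin n) ℂ := ϱ (Nmat n) with hM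
  set T : EuclideanSpace ℂ (Fin n) →L[ℂ] EuclideanSpace ℂ (Fin n) := φ M with hT
  -- ϱ of zero
  have hϱ0 : ϱ 0 = 0 := by
    have := hadd 0 0 toepl_zero toepl_zero
    simp only [add_zero] at this
    have h2 : ϱ 0 = ϱ 0 + ϱ 0 := this
    have := congrArg (fun A => A - ϱ 0) h2
    simpa using this.symm
  -- ϱ of powers of N
  have hϱNk : ∀ k : ℕ, ϱ (Nmat n ^ k) = M ^ k := by
    intro k
    induction k with
    | zero => simpa using hone
    | succ k ih =>
      rw [pow_succ, hmul _ _ (toepl_Nmat_pow k) (by simpa using toepl_Nmat_pow (n := n) 1),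
        ih, pow_succ]
  -- ϱ of Toeplitz combinations
  have hϱsum : ∀ (z : ℕ → ℂ) (s : Finset ℕ),
      ϱ (∑ k ∈ s, z k • Nmat n ^ k) = ∑ k ∈ s, z k • M ^ k := by
    intro z s
    induction s using Finset.induction with
    | empty => simpa using hϱ0
    | insert _ _ hk ih =>
      rw [Finset.sum_insert hk, Finset.sum_insert hk,
        hadd _ _ (toepl_smul _ (toepl_Nmat_pow _)) (toepl_sum z _),
        hsmul _ _ (toepl_Nmat_pow _), hϱNk, ih]
  -- T powers
  have hTk : ∀ k : ℕ, φ (M ^ k) = T ^ k := fun k => by rw [map_pow]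
  have hTknorm : ∀ k : ℕ, ‖T ^ k‖ = ‖φ (Nmat n ^ k)‖ := by
    intro k
    rw [← hTk, ← hϱNk]
    exact hnorm _ (toepl_Nmat_pow k)
  have hTkle : ∀ k : ℕ, ‖T ^ k‖ ≤ 1 := fun k => by
    rw [hTknorm]; exact opNorm_Nk_le k
  have hTle : ‖T‖ ≤ 1 := by have := hTkle 1; rwa [pow_one] at this
  have hTn : T ^ n = 0 := by
    rw [← hTk, ← hϱNk, Nmat_pow_n, hϱ0, map_zero]
  -- the norming vector
  obtain ⟨x, hx1, hxmax⟩ := exists_norm_attained hn0 (T ^ (n - 1))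
  have hxTn1 : ‖(T ^ (n - 1)) x‖ = 1 := by
    rw [hxmax, hTknorm, opNorm_Nk_eq (n - 1) (by omega)]
  set e : ℕ → EuclideanSpace ℂ (Fin n) := fun k => (T ^ k) x with he
  have hTpow_apply : ∀ j k : ℕ, (T ^ j) (e k) = e (k + j) := by
    intro j k
    rw [he]
    simp only
    rw [← ContinuousLinearMap.mul_apply, ← pow_add, add_comm]
  have hTapply : ∀ k : ℕ, T (e k) = e (k + 1) := by
    intro k
    have := hTpow_apply 1 k
    rwa [pow_one] at this
  have hen : e n = 0 := by
    rw [he]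
    simp only
    rw [hTn]
    rfl
  have he_ge : ∀ p : ℕ, n ≤ p → e p = 0 := by
    intro p hp
    have h1 : (T ^ (p - n)) (e n) = e p := by
      rw [hTpow_apply]
      have hnp : n + (p - n) = p := by omega
      rw [hnp]
    rw [← h1, hen, map_zero]
  -- norms of e k
  have hek_le : ∀ (k : ℕ) (y : EuclideanSpace ℂ (Fin n)), ‖(T ^ k) y‖ ≤ ‖y‖ := by
    intro k y
    calc ‖(T ^ k) y‖ ≤ ‖T ^ k‖ * ‖y‖ := (T ^ k).le_opNorm y
      _ ≤ 1 * ‖y‖ := mul_le_mul_of_nonneg_right (hTkle k) (norm_nonneg _)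
      _ = ‖y‖ := one_mul _
  have henorm : ∀ k : ℕ, k ≤ n - 1 → ‖e k‖ = 1 := by
    intro k hk
    have h1 : (1 : ℝ) ≤ ‖e k‖ := by
      have heq : (T ^ (n - 1 - k)) (e k) = e (n - 1) := by
        rw [hTpow_apply]
        have hnk : k + (n - 1 - k) = n - 1 := by omega
        rw [hnk]
      have : ‖e (n - 1)‖ ≤ ‖e k‖ := by
        rw [← heq]; exact hek_le _ _
      rw [he] at this
      simp only at this
      rwa [hxTn1] at this
    have h2 : ‖e k‖ ≤ 1 := by
      have := hek_le k x
      rw [hx1] at this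
      exact this
    linarith
  -- inner products shift
  have hinner_step : ∀ j k : ℕ, j + k ≤ n - 1 →
      (inner ℂ (e j) (e (j + k)) : ℂ) = inner ℂ (e 0) (e k) := by
    intro j
    induction j with
    | zero => intro k _; rw [Nat.zero_add]
    | succ j ih =>
      intro k hk
      have h1 : e (j + 1) = T (e j) := (hTapply j).symm
      have h2 : e (j + 1 + k) = T (e (j + k)) := by
        have hkk : j + 1 + k = j + k + 1 := by omega
        rw [hkk]
        exact (hTapply (j + k)).symm
      rw [h1, h2]
      have hTej : ‖T (e j)‖ = ‖e j‖ := by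
        rw [← h1, henorm (j + 1) (by omega), henorm j (by omega)]
      rw [inner_preserved hTle hTej (e (j + k))]
      exact ih k (by omega)
  -- orthogonality
  have horth : ∀ m : ℕ, 1 ≤ m → m ≤ n - 1 → (inner ℂ (e 0) (e m) : ℂ) = 0 := by
    intro m hm1 hm2
    set c : ℂ := inner ℂ (e 0) (e m) with hc
    set a : ℕ := n - 1 - m with ha
    have han : a + 1 < n := by omega
    have key : ∀ t : ℝ, 0 < t → 2 * t * ‖c‖ ^ 2 ≤ 1 := by
      intro t ht
      set lam : ℂ := (t : ℂ) * (starRingEnd ℂ) c with hlam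
      set Y : Matrix (Fin n) (Fin n) ℂ := Nmat n ^ a + lam • Nmat n ^ (n - 1) with hY
      have hYtoepl : IsUpperToeplitz Y :=
        toepl_add (toepl_Nmat_pow a) (toepl_smul lam (toepl_Nmat_pow (n - 1)))
      have hϱY : ϱ Y = M ^ a + lam • M ^ (n - 1) := by
        rw [hY, hadd _ _ (toepl_Nmat_pow a) (toepl_smul lam (toepl_Nmat_pow (n - 1))),
          hsmul lam _ (toepl_Nmat_pow (n - 1)), hϱNk, hϱNk]
      have hφϱY : φ (ϱ Y) = T ^ a + lam • T ^ (n - 1) := by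
        rw [hϱY, map_add, _root_.map_smul, hTk, hTk]
      have hvec : (φ (ϱ Y)) x = e a + lam • e (n - 1) := by
        rw [hφϱY, ContinuousLinearMap.add_apply, ContinuousLinearMap.smul_apply]
      -- upper bound for opNorm Y
      have hbound : ∀ v : EuclideanSpace ℂ (Fin n),
          ‖(φ Y) v‖ ≤ Real.sqrt (2 + ‖lam‖ ^ 2) * ‖v‖ := by
        intro v
        have h1 := key_bound a han lam v
        have h2 : ‖(φ Y) v‖ = Real.sqrt (‖(φ Y) v‖ ^ 2) :=
          (Real.sqrt_sq (norm_nonneg _)).symm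
        rw [h2]
        calc Real.sqrt (‖(φ Y) v‖ ^ 2) ≤ Real.sqrt ((2 + ‖lam‖ ^ 2) * ‖v‖ ^ 2) :=
              Real.sqrt_le_sqrt h1
          _ = Real.sqrt (2 + ‖lam‖ ^ 2) * ‖v‖ := by
              rw [Real.sqrt_mul (by positivity), Real.sqrt_sq (norm_nonneg _)]
      have hYnorm : ‖φ Y‖ ≤ Real.sqrt (2 + ‖lam‖ ^ 2) :=
        ContinuousLinearMap.opNorm_le_bound _ (Real.sqrt_nonneg _) hbound
      have hnormle : ‖e a + lam • e (n - 1)‖ ≤ Real.sqrt (2 + ‖lam‖ ^ 2) := by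
        rw [← hvec]
        calc ‖(φ (ϱ Y)) x‖ ≤ ‖φ (ϱ Y)‖ * ‖x‖ := (φ (ϱ Y)).le_opNorm x
          _ = ‖φ (ϱ Y)‖ := by rw [hx1, mul_one]
          _ = ‖φ Y‖ := hnorm Y hYtoepl
          _ ≤ Real.sqrt (2 + ‖lam‖ ^ 2) := hYnorm
      have hsq : ‖e a + lam • e (n - 1)‖ ^ 2 ≤ 2 + ‖lam‖ ^ 2 := by
        have h3 := pow_le_pow_left₀ (norm_nonneg _) hnormle 2
        rwa [Real.sq_sqrt (by positivity)] at h3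
      -- expand the left side
      have hiac : (inner ℂ (e a) (e (n - 1)) : ℂ) = c := by
        have h4 := hinner_step a m (by omega)
        have h5 : a + m = n - 1 := by omega
        rw [h5] at h4
        rw [h4, hc]
      have hexp : ‖e a + lam • e (n - 1)‖ ^ 2
          = 1 + 2 * (lam * c).re + ‖lam‖ ^ 2 := by
        rw [norm_add_sq (𝕜 := ℂ), inner_smul_right, hiac, norm_smul, mul_pow,
          henorm a (by omega), henorm (n - 1) (by omega)]
        simp only [RCLike.re_to_complex]
        ring
      have hlamc : (lam * c).re = t * ‖c‖ ^ 2 := by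
        rw [hlam, mul_assoc]
        have : (starRingEnd ℂ) c * c = ((‖c‖ ^ 2 : ℝ) : ℂ) := by
          rw [mul_comm, Complex.mul_conj, Complex.sq_norm]
        rw [this, ← Complex.ofReal_mul, Complex.ofReal_re]
      rw [hexp, hlamc] at hsq
      linarith
    by_contra hcne
    have habs : 0 < ‖c‖ ^ 2 := by
      have := norm_pos_iff.mpr hcne
      positivity
    have h7 := key (‖c‖ ^ 2)⁻¹ (by positivity)
    rw [mul_assoc, inv_mul_cancel₀ (ne_of_gt habs), mul_one] at h7
    norm_num at h7
  -- the Gram matrix is the identity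
  have gram : ∀ j k : ℕ, j ≤ n - 1 → k ≤ n - 1 →
      (inner ℂ (e j) (e k) : ℂ) = if j = k then 1 else 0 := by
    have gram_le : ∀ j k : ℕ, j ≤ k → k ≤ n - 1 →
        (inner ℂ (e j) (e k) : ℂ) = if j = k then 1 else 0 := by
      intro j k hjk hk
      have h1 : (inner ℂ (e j) (e k) : ℂ) = inner ℂ (e 0) (e (k - j)) := by
        have h4 := hinner_step j (k - j) (by omega)
        have h5 : j + (k - j) = k := by omega
        rw [h5] at h4
        exact h4
      rcases Nat.eq_or_lt_of_le hjk with rfl | hlt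
      · rw [if_pos rfl, h1]
        have h2 : j - j = 0 := by omega
        rw [h2, inner_self_eq_norm_sq_to_K, henorm 0 (by omega)]
        norm_num
      · rw [if_neg (by omega), h1, horth (k - j) (by omega) (by omega)]
    intro j k hj hk
    rcases le_or_gt j k with h | h
    · exact gram_le j k h hk
    · have := gram_le k j (le_of_lt h) hj
      rw [← inner_conj_symm, this, if_neg (by omega)]
      rw [if_neg (by omega)]
      simp
  -- the unitary
  set V : Matrix (Fin n) (Fin n) ℂ := Matrix.of fun i j => e (n - 1 - (j : ℕ)) i with hV
  have hVapply : ∀ i j : Fin n, V i j = e (n - 1 - (j : ℕ)) i := fun i j => rfl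
  have hVcol : star V * V = 1 := by
    ext j k
    rw [Matrix.mul_apply]
    have hsum : ∑ i, (star V) j i * V i k
        = (inner ℂ (e (n - 1 - (j : ℕ))) (e (n - 1 - (k : ℕ))) : ℂ) := by
      rw [PiLp.inner_apply]
      refine Finset.sum_congr rfl fun i _ => ?_
      rw [Matrix.star_apply, hVapply, hVapply, RCLike.inner_apply']
      rfl
    rw [hsum, gram _ _ (by omega) (by omega), Matrix.one_apply]
    have hiff : (n - 1 - (j : ℕ) = n - 1 - (k : ℕ)) ↔ j = k := by
      rw [Fin.ext_iff]
      have := j.is_lt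
      have := k.is_lt
      omega
    by_cases h : j = k
    · rw [if_pos (hiff.mpr h), if_pos h]
    · rw [if_neg (fun hc => h (hiff.mp hc)), if_neg h]
  have hVV : V * star V = 1 := mul_eq_one_comm.mp hVcol
  have hMV : ∀ k : ℕ, M ^ k * V = V * Nmat n ^ k := by
    intro k
    ext i j
    rw [Matrix.mul_apply, Matrix.mul_apply]
    have hl : ∑ l, (M ^ k) i l * V l j = e ((n - 1 - (j : ℕ)) + k) i := by
      have h1 : ∑ l, (M ^ k) i l * V l j = (φ (M ^ k)) (e (n - 1 - (j : ℕ))) i := by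
        rw [phi_apply]
        rfl
      rw [h1, hTk, hTpow_apply]
    rw [hl]
    rcases Nat.lt_or_ge (j : ℕ) k with h | h
    · have hz : ∀ l : Fin n, l ∈ Finset.univ → V i l * (Nmat n ^ k) l j = 0 := by
        intro l _
        rw [Nmat_pow_apply, if_neg (by omega), mul_zero]
      rw [Finset.sum_eq_zero hz]
      have h2 : e ((n - 1 - (j : ℕ)) + k) = 0 := he_ge _ (by have := j.is_lt; omega)
      rw [h2]
      rfl
    · have hjk : (j : ℕ) - k < n := by have := j.is_lt; omega
      rw [Finset.sum_eq_single (⟨(j : ℕ) - k, hjk⟩ : Fin n)]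
      · rw [Nmat_pow_apply, if_pos (by simp; omega), mul_one, hVapply]
        have hidx : n - 1 - (((⟨(j : ℕ) - k, hjk⟩ : Fin n)) : ℕ) = (n - 1 - (j : ℕ)) + k := by
          simp only [Fin.val_mk]
          have := j.is_lt
          omega
        rw [hidx]
      · intro l _ hl'
        rw [Nmat_pow_apply, if_neg (fun hc => hl' (Fin.ext (by simp; omega))), mul_zero]
      · simp
  have hconj : ∀ k : ℕ, V * Nmat n ^ k * star V = M ^ k := by
    intro k
    rw [← hMV, Matrix.mul_assoc, hVV, Matrix.mul_one]
  refine ⟨star V, ?_, ?_⟩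
  · rw [Matrix.mem_unitaryGroup_iff, star_star]
    exact hVcol
  · intro X hX
    obtain ⟨z, hz⟩ := toepl_repr hX
    rw [hz, hϱsum, star_star]
    rw [Finset.mul_sum, Finset.sum_mul]
    refine Finset.sum_congr rfl fun k _ => ?_
    rw [Matrix.mul_smul, Matrix.smul_mul, hconj]
end

section
/- Let n ≥ 1 and let A ∈ M_n(ℂ) be a strictly upper triangular matrix whose first superdiagonal entries all equal 1 (A_{i,i+1} = 1 for 1 ≤ i ≤ n−1, A_{ij} = 0 for j ≤ i, and A_{ij} arbitrary for j ≥ i+2). If ‖∑_{k=1}^{n−1} (−1)^{k+1} A^k‖ ≤ 1, then A = Q, where Q ∈ M_n(ℂ) is the strictly upper triangular matrix all of whose entries above the main diagonal equal 1. -/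
open Matrix Finset

/-- If `A` is strictly upper triangular with all first-superdiagonal entries equal to `1`,
and `‖∑_{k=1}^{n-1} (-1)^(k+1) A^k‖ ≤ 1`, then `A = Q`, where `Q` is the strictly upper
triangular matrix all of whose entries above the diagonal equal `1`. -/
theorem eq_Q_of_norm_alternating_sum_le_one
    (n : ℕ) (hn : 1 ≤ n)
    (A Q : Matrix (Fin n) (Fin n) ℂ)
    (hstrict : ∀ i j : Fin n, (j : ℕ) ≤ (i : ℕ) → A i j = 0)
    (hsuper : ∀ i j : Fin n, (i : ℕ) + 1 = (j : ℕ) → A i j = 1)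
    (hQ : ∀ i j : Fin n, Q i j = if (i : ℕ) < (j : ℕ) then 1 else 0)
    (hnorm : opNorm (∑ k ∈ Finset.Icc 1 (n - 1), ((-1 : ℂ)) ^ (k + 1) • A ^ k) ≤ 1) :
    A = Q := by
  set B : Matrix (Fin n) (Fin n) ℂ :=
    ∑ k ∈ Finset.Icc 1 (n - 1), ((-1 : ℂ)) ^ (k + 1) • A ^ k with hBdef
  -- powers of A vanish below the k-th superdiagonal
  have hpow : ∀ k : ℕ, 1 ≤ k → ∀ i j : Fin n, (j : ℕ) < (i : ℕ) + k → (A ^ k) i j = 0 := by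
    intro k hk
    obtain ⟨m, rfl⟩ : ∃ m, k = m + 1 := ⟨k - 1, by omega⟩
    clear hk
    induction m with
    | zero =>
      intro i j hj
      simpa using hstrict i j (by omega)
    | succ m ih =>
      intro i j hj
      rw [pow_succ, Matrix.mul_apply]
      refine Finset.sum_eq_zero fun t _ => ?_
      rcases lt_or_ge (t : ℕ) ((i : ℕ) + (m + 1)) with ht | ht
      · rw [ih i t ht, zero_mul]
      · rw [hstrict t j (by omega), mul_zero]
  have hBapply : ∀ i j : Fin n,
      B i j = ∑ k ∈ Finset.Icc 1 (n - 1), ((-1 : ℂ)) ^ (k + 1) * (A ^ k) i j := by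
    intro i j
    rw [hBdef]
    simp [Matrix.sum_apply]
  -- B vanishes on and below the diagonal
  have hBlow : ∀ i j : Fin n, (j : ℕ) ≤ (i : ℕ) → B i j = 0 := by
    intro i j hij
    rw [hBapply]
    refine Finset.sum_eq_zero fun k hk => ?_
    rw [Finset.mem_Icc] at hk
    rw [hpow k hk.1 i j (by omega), mul_zero]
  -- B has ones on the first superdiagonal
  have hBsuper : ∀ i j : Fin n, (i : ℕ) + 1 = (j : ℕ) → B i j = 1 := by
    intro i j hij
    rw [hBapply]
    rw [Finset.sum_eq_single 1]
    · simp [hsuper i j hij]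
    · intro k hk hk1
      rw [Finset.mem_Icc] at hk
      rw [hpow k hk.1 i j (by omega), mul_zero]
    · intro h
      exfalso
      rw [Finset.mem_Icc] at h
      have : (j : ℕ) < n := j.isLt
      omega
  -- columns of B have ℓ² norm at most 1
  have hcol : ∀ j : Fin n, ∑ i, ‖B i j‖ ^ 2 ≤ 1 := by
    intro j
    have h1 : ‖toEuclideanCLM (𝕜 := ℂ) B (EuclideanSpace.single j 1)‖ ≤ 1 := by
      calc ‖toEuclideanCLM (𝕜 := ℂ) B (EuclideanSpace.single j 1)‖
          ≤ ‖toEuclideanCLM (𝕜 := ℂ) B‖ * ‖EuclideanSpace.single j (1 : ℂ)‖ :=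
            (toEuclideanCLM (𝕜 := ℂ) B).le_opNorm _
        _ ≤ 1 := by
            rw [EuclideanSpace.norm_single, norm_one, mul_one]
            exact hnorm
    have h2 : toEuclideanCLM (𝕜 := ℂ) B (EuclideanSpace.single j 1)
        = (WithLp.equiv 2 ((Fin n) → ℂ)).symm (fun i => B i j) := by
      rw [show EuclideanSpace.single j (1 : ℂ) = WithLp.toLp 2 (Pi.single j 1) by
        ext k; simp [PiLp.single_apply, Pi.single_apply], toEuclideanCLM_toLp]
      ext i
      simp [Matrix.mulVec_single]
    rw [h2] at h1
    have h3 : ‖(WithLp.equiv 2 ((Fin n) → ℂ)).symm (fun i => B i j)‖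
        = Real.sqrt (∑ i, ‖B i j‖ ^ 2) := by
      rw [EuclideanSpace.norm_eq]
      congr 1
    rw [h3] at h1
    have h4 : (0 : ℝ) ≤ ∑ i, ‖B i j‖ ^ 2 := Finset.sum_nonneg fun i _ => by positivity
    nlinarith [Real.sq_sqrt h4, Real.sqrt_nonneg (∑ i, ‖B i j‖ ^ 2)]
  -- B vanishes strictly above the first superdiagonal
  have hB0 : ∀ i j : Fin n, (i : ℕ) + 1 < (j : ℕ) → B i j = 0 := by
    intro i j hij
    have hj1 : (j : ℕ) - 1 < n := by omega
    set i1 : Fin n := ⟨(j : ℕ) - 1, hj1⟩ with hi1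
    have hne : i1 ≠ i := by
      intro h
      have := congrArg (Fin.val) h
      simp [hi1] at this
      omega
    have h1 : B i1 j = 1 := hBsuper i1 j (by simp [hi1]; omega)
    have hle : ‖B i1 j‖ ^ 2 + ‖B i j‖ ^ 2 ≤ ∑ r, ‖B r j‖ ^ 2 := by
      have hsub : ({i1, i} : Finset (Fin n)) ⊆ Finset.univ := Finset.subset_univ _
      have := Finset.sum_le_sum_of_subset_of_nonneg hsub
        (fun r _ _ => by positivity : ∀ r ∈ Finset.univ, r ∉ ({i1, i} : Finset (Fin n)) →
          (0:ℝ) ≤ ‖B r j‖ ^ 2)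
      rwa [Finset.sum_pair hne] at this
    rw [h1] at hle
    simp only [norm_one, one_pow] at hle
    have := hcol j
    have h5 : ‖B i j‖ ^ 2 ≤ 0 := by linarith
    have h6 : ‖B i j‖ = 0 := by nlinarith [norm_nonneg (B i j)]
    exact norm_eq_zero.mp h6
  -- full description of B
  have hBval : ∀ i j : Fin n, B i j = if (i : ℕ) + 1 = (j : ℕ) then 1 else 0 := by
    intro i j
    rcases lt_trichotomy ((i : ℕ) + 1) (j : ℕ) with h | h | h
    · rw [hB0 i j h, if_neg (by omega)]
    · rw [hBsuper i j h, if_pos h]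
    · rw [hBlow i j (by omega), if_neg (by omega)]
  -- A is nilpotent
  have hAn : A ^ n = 0 := by
    ext i j
    rw [hpow n hn i j (by omega)]
    simp
  -- geometric series identity : (1 - B) * (1 + A) = 1
  have hgeom : (1 - B) * (1 + A) = 1 := by
    have hterm : ∀ k : ℕ, ((-1 : ℂ)) ^ (k + 1) • A ^ k = -((-A) ^ k) := by
      intro k
      have h1 : ((-1 : ℂ)) ^ (k + 1) = -((-1 : ℂ) ^ k) := by ring
      rw [h1, neg_smul, ← neg_one_smul ℂ A, smul_pow]
    have hrange : Finset.range n = insert 0 (Finset.Icc 1 (n - 1)) := by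
      ext k
      simp only [Finset.mem_range, Finset.mem_insert, Finset.mem_Icc]
      omega
    have hBeq : (1 : Matrix (Fin n) (Fin n) ℂ) - B = ∑ k ∈ Finset.range n, (-A) ^ k := by
      rw [hrange, Finset.sum_insert (by simp), hBdef]
      simp only [hterm, Finset.sum_neg_distrib, sub_neg_eq_add, pow_zero]
    have hmul := geom_sum_mul (-A) n
    rw [← hBeq] at hmul
    have hAn' : (-A) ^ n = 0 := by
      rw [← neg_one_smul ℂ A, smul_pow, hAn, smul_zero]
    rw [hAn', zero_sub] at hmul
    have h2 : (-A - 1 : Matrix (Fin n) (Fin n) ℂ) = -(1 + A) := by abel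
    rw [h2, mul_neg] at hmul
    exact neg_injective hmul
  -- (1 - B) * (1 + Q) = 1
  have hQgeom : (1 - B) * (1 + Q) = 1 := by
    have hQeq : Q = B + B * Q := by
      ext i j
      rw [Matrix.add_apply, Matrix.mul_apply]
      by_cases hi : (i : ℕ) + 1 < n
      · set i' : Fin n := ⟨(i : ℕ) + 1, hi⟩ with hi'
        have hsum : ∑ t, B i t * Q t j = Q i' j := by
          rw [Finset.sum_eq_single i']
          · rw [hBval, if_pos (by simp [hi']), one_mul]
          · intro t _ ht
            rw [hBval, if_neg, zero_mul]
            intro h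
            exact ht (Fin.ext (by simp [hi', ← h]))
          · intro h; exact absurd (Finset.mem_univ i') h
        rw [hsum, hBval, hQ, hQ]
        have hj : (j : ℕ) < n := j.isLt
        simp only [hi']
        split_ifs <;> first | omega | norm_num
      · have hB0' : ∀ t : Fin n, B i t = 0 := by
          intro t
          rw [hBval, if_neg]
          have := t.isLt
          omega
        rw [hB0' j]
        rw [Finset.sum_eq_zero fun t _ => by rw [hB0' t, zero_mul]]
        rw [hQ, if_neg]
        · norm_num
        · have := j.isLt
          omega
    have h7 : (1 - B) * (1 + Q) = 1 + (Q - (B + B * Q)) := by noncomm_ring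
    rw [h7, ← hQeq, sub_self, add_zero]
  -- conclude
  have hcomm : (1 + A) * (1 - B) = 1 := mul_eq_one_comm.mp hgeom
  have hfinal : 1 + A = 1 + Q := by
    calc 1 + A = (1 + A) * ((1 - B) * (1 + Q)) := by rw [hQgeom, mul_one]
      _ = ((1 + A) * (1 - B)) * (1 + Q) := by rw [mul_assoc]
      _ = 1 + Q := by rw [hcomm, one_mul]
  exact add_left_cancel hfinal
end

section
/- Let 0 < α < β be real numbers and let A, A' ∈ M_3(ℂ) be the matrices A = [[0, α, 0], [0, 0, β], [0, 0, 0]] and A' = [[0, β, 0], [0, 0, α], [0, 0, 0]]. Then ‖f(A')‖ = ‖f(A)‖ for every polynomial f ∈ ℂ[t], yet A' is not unitarily similar to A. -/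
open Polynomial Matrix

section Aux

open scoped Matrix.Norms.L2Operator

lemma opNorm_eq_norm {n : ℕ} (A : Matrix (Fin n) (Fin n) ℂ) : opNorm A = ‖A‖ := rfl

/-- The operator norm is invariant under unitary conjugation. -/
lemma opNorm_unitary_conj {n : ℕ} (M U : Matrix (Fin n) (Fin n) ℂ)
    (hU : U ∈ Matrix.unitaryGroup (Fin n) ℂ) :
    opNorm (star U * M * U) = opNorm M := by
  rw [opNorm_eq_norm, opNorm_eq_norm, mul_assoc,
    CStarRing.norm_mem_unitary_mul (M * U) (Unitary.star_mem hU),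
    CStarRing.norm_mul_mem_unitary M hU]

lemma euclidean_norm_star {n : ℕ} (y : Fin n → ℂ) :
    ‖(WithLp.equiv 2 (Fin n → ℂ)).symm (fun k => star (y k))‖ =
      ‖(WithLp.equiv 2 (Fin n → ℂ)).symm y‖ := by
  rw [EuclideanSpace.norm_eq, EuclideanSpace.norm_eq]
  simp

lemma mulVec_map_conj {n : ℕ} (M : Matrix (Fin n) (Fin n) ℂ) (y : Fin n → ℂ) :
    (M.map (starRingEnd ℂ)) *ᵥ y = fun i => star ((M *ᵥ fun k => star (y k)) i) := by
  funext i
  simp [Matrix.mulVec, dotProduct, Finset.sum_comm, map_sum, mul_comm]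

lemma norm_map_conj_le {n : ℕ} (M : Matrix (Fin n) (Fin n) ℂ) :
    ‖M.map (starRingEnd ℂ)‖ ≤ ‖M‖ := by
  rw [Matrix.cstar_norm_def, Matrix.cstar_norm_def]
  refine ContinuousLinearMap.opNorm_le_bound _ (norm_nonneg _) fun x => ?_
  obtain ⟨y, rfl⟩ : ∃ y, (WithLp.equiv 2 (Fin n → ℂ)).symm y = x :=
    ⟨WithLp.equiv 2 _ x, rfl⟩
  erw [Matrix.toEuclideanCLM_toLp, mulVec_map_conj]
  calc ‖(WithLp.equiv 2 (Fin n → ℂ)).symm fun i => star ((M *ᵥ fun k => star (y k)) i)‖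
      = ‖(WithLp.equiv 2 (Fin n → ℂ)).symm (M *ᵥ fun k => star (y k))‖ :=
        euclidean_norm_star _
    _ = ‖toEuclideanCLM (𝕜 := ℂ) M ((WithLp.equiv 2 (Fin n → ℂ)).symm fun k => star (y k))‖ := by
        erw [Matrix.toEuclideanCLM_toLp]
    _ ≤ ‖toEuclideanCLM (𝕜 := ℂ) M‖ * ‖(WithLp.equiv 2 (Fin n → ℂ)).symm fun k => star (y k)‖ :=
        ContinuousLinearMap.le_opNorm _ _
    _ = ‖toEuclideanCLM (𝕜 := ℂ) M‖ * ‖(WithLp.equiv 2 (Fin n → ℂ)).symm y‖ := by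
        rw [euclidean_norm_star]

lemma norm_map_conj {n : ℕ} (M : Matrix (Fin n) (Fin n) ℂ) :
    ‖M.map (starRingEnd ℂ)‖ = ‖M‖ := by
  refine le_antisymm (norm_map_conj_le M) ?_
  have := norm_map_conj_le (M.map (starRingEnd ℂ))
  rwa [Matrix.map_map, show ((starRingEnd ℂ) : ℂ → ℂ) ∘ (starRingEnd ℂ) = id by
    funext z; simp, Matrix.map_id] at this

/-- The operator norm is invariant under transposition. -/
lemma opNorm_transpose {n : ℕ} (M : Matrix (Fin n) (Fin n) ℂ) : opNorm Mᵀ = opNorm M := by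
  rw [opNorm_eq_norm, opNorm_eq_norm]
  have h : Mᵀ = (M.map (starRingEnd ℂ))ᴴ := by
    ext i j
    simp [Matrix.conjTranspose_apply]
  rw [h, Matrix.l2_opNorm_conjTranspose, norm_map_conj]

end Aux

/-- If `A' = P Aᵀ P` with `P * P = 1`, then `f(A') = P f(A)ᵀ P` for every polynomial. -/
lemma aeval_conj_transpose {R : Type*} [CommRing R] {n : Type*} [Fintype n] [DecidableEq n]
    (A A' P : Matrix n n R) (hP : P * P = 1) (hA' : A' = P * Aᵀ * P) (f : Polynomial R) :
    aeval A' f = P * (aeval A f)ᵀ * P := by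
  have key : ∀ X Y : Matrix n n R, (P*X*P)*(P*Y*P) = P*(X*Y)*P := by
    intro X Y
    calc (P*X*P)*(P*Y*P) = P*(X*((P*P)*(Y*P))) := by simp only [mul_assoc]
    _ = P*(X*Y)*P := by rw [hP, one_mul]; simp only [mul_assoc]
  have hpow : ∀ k : ℕ, A' ^ k = P * (A ^ k)ᵀ * P := by
    intro k
    induction k with
    | zero => simpa using hP.symm
    | succ k ih =>
      rw [pow_succ, ih, hA', key, ← Matrix.transpose_mul, ← pow_succ']
  induction f using Polynomial.induction_on' with
  | add p q hp hq => simp [hp, hq, Matrix.transpose_add, mul_add, add_mul]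
  | monomial k a =>
    simp only [aeval_monomial, hpow, Algebra.algebraMap_eq_smul_one, smul_mul_assoc, one_mul,
      Matrix.transpose_smul, Matrix.mul_smul, Matrix.smul_mul]

/-- The trace of the word `X*XX*XXX*` for the relevant explicit matrices. -/
lemma step_chain (a b : ℂ) :
    Matrix.trace (!![0, 0, 0; a, 0, 0; 0, b, 0] * !![0, a, 0; 0, 0, b; 0, 0, 0]
      * !![0, 0, 0; a, 0, 0; 0, b, 0] * !![0, a, 0; 0, 0, b; 0, 0, 0]
      * !![0, a, 0; 0, 0, b; 0, 0, 0] * !![0, 0, 0; a, 0, 0; 0, b, 0])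
      = a^4 * b^2 := by
  have s1 : !![0, 0, 0; a, 0, 0; 0, b, 0] * !![(0:ℂ), a, 0; 0, 0, b; 0, 0, 0]
      = !![0, 0, 0; 0, a*a, 0; 0, 0, b*b] := by
    ext i j
    fin_cases i <;> fin_cases j <;>
      simp [Matrix.mul_apply, Fin.sum_univ_three, Matrix.vecHead, Matrix.vecTail]
  have s2 : !![(0:ℂ), 0, 0; 0, a*a, 0; 0, 0, b*b] * !![0, 0, 0; a, 0, 0; 0, b, 0]
      = !![0, 0, 0; a*a*a, 0, 0; 0, b*b*b, 0] := by
    ext i j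
    fin_cases i <;> fin_cases j <;>
      simp [Matrix.mul_apply, Fin.sum_univ_three, Matrix.vecHead, Matrix.vecTail]
  have s3 : !![(0:ℂ), 0, 0; a*a*a, 0, 0; 0, b*b*b, 0] * !![0, a, 0; 0, 0, b; 0, 0, 0]
      = !![0, 0, 0; 0, a*a*a*a, 0; 0, 0, b*b*b*b] := by
    ext i j
    fin_cases i <;> fin_cases j <;>
      simp [Matrix.mul_apply, Fin.sum_univ_three, Matrix.vecHead, Matrix.vecTail]
  have s4 : !![(0:ℂ), 0, 0; 0, a*a*a*a, 0; 0, 0, b*b*b*b] * !![0, a, 0; 0, 0, b; 0, 0, 0]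
      = !![0, 0, 0; 0, 0, a*a*a*a*b; 0, 0, 0] := by
    ext i j
    fin_cases i <;> fin_cases j <;>
      simp [Matrix.mul_apply, Fin.sum_univ_three, Matrix.vecHead, Matrix.vecTail]
  have s5 : !![(0:ℂ), 0, 0; 0, 0, a*a*a*a*b; 0, 0, 0] * !![0, 0, 0; a, 0, 0; 0, b, 0]
      = !![0, 0, 0; 0, a*a*a*a*b*b, 0; 0, 0, 0] := by
    ext i j
    fin_cases i <;> fin_cases j <;>
      simp [Matrix.mul_apply, Fin.sum_univ_three, Matrix.vecHead, Matrix.vecTail]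
  rw [s1, s2, s3, s4, s5]
  simp [Matrix.trace_fin_three, Matrix.vecHead, Matrix.vecTail]
  ring

/-- For `0 < α < β`, the matrices `A = [[0,α,0],[0,0,β],[0,0,0]]` and
`A' = [[0,β,0],[0,0,α],[0,0,0]]` satisfy `‖f(A')‖ = ‖f(A)‖` for every polynomial `f`,
yet `A'` is not unitarily similar to `A`. -/
theorem norm_equal_not_unitarily_similar
    (α β : ℝ) (hα : 0 < α) (hαβ : α < β)
    (A A' : Matrix (Fin 3) (Fin 3) ℂ)
    (hA : A = !![0, (α : ℂ), 0; 0, 0, (β : ℂ); 0, 0, 0])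
    (hA' : A' = !![0, (β : ℂ), 0; 0, 0, (α : ℂ); 0, 0, 0]) :
    (∀ f : Polynomial ℂ, opNorm (aeval A' f) = opNorm (aeval A f)) ∧
    ¬ ∃ U : Matrix (Fin 3) (Fin 3) ℂ, U ∈ Matrix.unitaryGroup (Fin 3) ℂ ∧
        A' = star U * A * U := by
  constructor
  · -- first part : equality of operator norms
    intro f
    set P : Matrix (Fin 3) (Fin 3) ℂ := !![0,0,1;0,1,0;1,0,0] with hP
    have hPP : P * P = 1 := by
      rw [hP, Matrix.one_fin_three]
      norm_num [Matrix.mul_fin_three]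
    have hPstar : star P = P := by
      ext i j
      fin_cases i <;> fin_cases j <;>
        simp [hP, Matrix.star_apply, Matrix.vecHead, Matrix.vecTail]
    have hAT : Aᵀ = !![0, 0, 0; (α : ℂ), 0, 0; 0, (β : ℂ), 0] := by
      ext i j
      fin_cases i <;> fin_cases j <;> simp [hA, Matrix.vecHead, Matrix.vecTail]
    have hconj : A' = P * Aᵀ * P := by
      rw [hAT, hA', hP]
      norm_num [Matrix.mul_fin_three]
      ext i j
      fin_cases i <;> fin_cases j <;> simp [Matrix.vecHead, Matrix.vecTail]
    have hPU : P ∈ Matrix.unitaryGroup (Fin 3) ℂ := by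
      rw [Matrix.mem_unitaryGroup_iff', hPstar]
      exact hPP
    rw [aeval_conj_transpose A A' P hPP hconj f]
    calc opNorm (P * (aeval A f)ᵀ * P)
        = opNorm (star P * (aeval A f)ᵀ * P) := by rw [hPstar]
      _ = opNorm (aeval A f)ᵀ := opNorm_unitary_conj _ P hPU
      _ = opNorm (aeval A f) := opNorm_transpose _
  · -- second part : not unitarily similar
    rintro ⟨U, hUm, hU⟩
    obtain ⟨h1, h2⟩ := Unitary.mem_iff.mp hUm
    have hsA' : star A' = star U * star A * U := by
      rw [hU]; simp [Matrix.star_mul, star_star, mul_assoc]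
    have key : ∀ X Y : Matrix (Fin 3) (Fin 3) ℂ,
        (star U * X * U) * (star U * Y * U) = star U * (X * Y) * U := by
      intro X Y
      calc (star U * X * U) * (star U * Y * U)
          = star U * (X * ((U * star U) * (Y * U))) := by simp only [mul_assoc]
        _ = star U * (X * Y) * U := by rw [h2, one_mul]; simp only [mul_assoc]
    have hW : star A' * A' * star A' * A' * A' * star A'
        = star U * (star A * A * star A * A * A * star A) * U := by
      rw [hsA', hU, key, key, key, key, key]
    have htr : trace (star A' * A' * star A' * A' * A' * star A')
        = trace (star A * A * star A * A * A * star A) := by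
      rw [hW, Matrix.trace_mul_cycle, ← mul_assoc, h2, one_mul]
    have hAs : star A = !![0, 0, 0; (α : ℂ), 0, 0; 0, (β : ℂ), 0] := by
      ext i j
      fin_cases i <;> fin_cases j <;>
        simp [hA, Matrix.star_apply, Matrix.vecHead, Matrix.vecTail]
    have hA's : star A' = !![0, 0, 0; (β : ℂ), 0, 0; 0, (α : ℂ), 0] := by
      ext i j
      fin_cases i <;> fin_cases j <;>
        simp [hA', Matrix.star_apply, Matrix.vecHead, Matrix.vecTail]
    rw [hAs, hA's, hA, hA', step_chain, step_chain] at htr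
    have hre : β ^ 4 * α ^ 2 = α ^ 4 * β ^ 2 := by exact_mod_cast htr
    have hβ : 0 < β := hα.trans hαβ
    have h4 : α ^ 2 < β ^ 2 := by nlinarith
    nlinarith [mul_pos (mul_pos (mul_pos hα hα) (mul_pos hβ hβ)) (sub_pos.mpr h4)]
end

section
/- Let R ∈ M_n(ℂ) be an upper triangular Toeplitz matrix with entries R_{ij} = z_{j−i} for j ≥ i, where z_1 ≠ 0. Then R − z_0 I is similar to the nilpotent Jordan block S ∈ M_n(ℂ): there exists an invertible X ∈ M_n(ℂ) with S = X(R − z_0 I)X⁻¹. -/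
open Matrix

private lemma pow_entry_aux (n : ℕ) (N : Matrix (Fin n) (Fin n) ℂ) (a : ℂ)
    (h0 : ∀ i j : Fin n, (j : ℕ) ≤ (i : ℕ) → N i j = 0)
    (h1 : ∀ i j : Fin n, (i : ℕ) + 1 = (j : ℕ) → N i j = a) :
    ∀ k : ℕ, ∀ i j : Fin n,
      ((j : ℕ) < (i : ℕ) + k → (N ^ k) i j = 0) ∧
      ((i : ℕ) + k = (j : ℕ) → (N ^ k) i j = a ^ k) := by
  intro k
  induction k with
  | zero =>
    intro i j
    constructor
    · intro hjk
      simp only [pow_zero, one_apply]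
      have : i ≠ j := by
        intro h; subst h; omega
      simp [this]
    · intro hij
      have : i = j := Fin.ext (by omega)
      subst this
      simp
  | succ k ih =>
    intro i j
    rw [pow_succ]
    constructor
    · intro hjk
      rw [mul_apply]
      apply Finset.sum_eq_zero
      intro l _
      rcases lt_or_ge (l : ℕ) ((i : ℕ) + k) with hl | hl
      · rw [(ih i l).1 hl, zero_mul]
      · rw [h0 l j (by omega), mul_zero]
    · intro hij
      have hlt : (i : ℕ) + k < n := by omega
      rw [mul_apply]
      rw [Finset.sum_eq_single (⟨(i : ℕ) + k, hlt⟩ : Fin n)]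
      · rw [(ih i ⟨(i : ℕ) + k, hlt⟩).2 rfl, h1 ⟨(i : ℕ) + k, hlt⟩ j (by simp; omega)]
        ring
      · intro l _ hl
        rcases lt_or_ge (l : ℕ) ((i : ℕ) + k) with h | h
        · rw [(ih i l).1 h, zero_mul]
        · have : (i : ℕ) + k < (l : ℕ) := by
            rcases lt_or_eq_of_le h with h' | h'
            · exact h'
            · exact absurd (Fin.ext h'.symm) hl
          rw [h0 l j (by omega), mul_zero]
      · intro h
        exact absurd (Finset.mem_univ _) h

/-- If `R` is an upper triangular Toeplitz matrix with `z 1 ≠ 0`, then `R - z₀ I` is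
similar to the nilpotent Jordan block `S`. -/
theorem toeplitz_sub_scalar_similar_jordan_block
    (n : ℕ) (hn : 1 ≤ n) (z : ℕ → ℂ) (hz : z 1 ≠ 0)
    (R : Matrix (Fin n) (Fin n) ℂ)
    (hR : ∀ i j : Fin n, R i j = if (i : ℕ) ≤ (j : ℕ) then z ((j : ℕ) - (i : ℕ)) else 0)
    (S : Matrix (Fin n) (Fin n) ℂ)
    (hS : ∀ i j : Fin n, S i j = if (i : ℕ) + 1 = (j : ℕ) then 1 else 0) :
    ∃ X : Matrix (Fin n) (Fin n) ℂ, IsUnit X ∧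
      S = X * (R - z 0 • (1 : Matrix (Fin n) (Fin n) ℂ)) * X⁻¹ := by
  set N : Matrix (Fin n) (Fin n) ℂ := R - z 0 • (1 : Matrix (Fin n) (Fin n) ℂ) with hNdef
  have hN : ∀ i j : Fin n, N i j =
      (if (i : ℕ) ≤ (j : ℕ) then z ((j : ℕ) - (i : ℕ)) else 0)
        - (if i = j then z 0 else 0) := by
    intro i j
    simp [hNdef, hR i j, one_apply, Matrix.sub_apply, mul_comm]
  have h0 : ∀ i j : Fin n, (j : ℕ) ≤ (i : ℕ) → N i j = 0 := by
    intro i j hji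
    rcases eq_or_lt_of_le hji with h | h
    · have hij : i = j := Fin.ext h.symm
      rw [hN, if_pos hij]
      subst hij
      simp
    · rw [hN, if_neg (by omega), if_neg (by intro h'; subst h'; omega)]
      ring
  have h1 : ∀ i j : Fin n, (i : ℕ) + 1 = (j : ℕ) → N i j = z 1 := by
    intro i j hij
    rw [hN, if_pos (by omega), if_neg (by intro h'; subst h'; omega)]
    have : (j : ℕ) - (i : ℕ) = 1 := by omega
    rw [this]; ring
  have key := pow_entry_aux n N (z 1) h0 h1
  have hlast : n - 1 < n := by omega
  set last : Fin n := ⟨n - 1, hlast⟩ with hlastdef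
  set Y : Matrix (Fin n) (Fin n) ℂ :=
    fun i j => (N ^ (n - 1 - (j : ℕ))) i last with hYdef
  -- Y is upper triangular
  have hYtri : Y.BlockTriangular id := by
    intro i j hij
    simp only [id] at hij
    exact (key (n - 1 - (j : ℕ)) i last).1 (by simp [hlastdef]; omega)
  -- diagonal entries
  have hYdiag : ∀ i : Fin n, Y i i = z 1 ^ (n - 1 - (i : ℕ)) := by
    intro i
    exact (key (n - 1 - (i : ℕ)) i last).2 (by simp [hlastdef]; omega)
  have hdet : Y.det ≠ 0 := by
    rw [Matrix.det_of_upperTriangular hYtri]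
    apply Finset.prod_ne_zero_iff.2
    intro i _
    rw [hYdiag i]
    exact pow_ne_zero _ hz
  have hdetU : IsUnit Y.det := isUnit_iff_ne_zero.2 hdet
  have hYunit : IsUnit Y := (Matrix.isUnit_iff_isUnit_det Y).2 hdetU
  -- N ^ n = 0
  have hNn : N ^ n = 0 := by
    ext i j
    rw [Matrix.zero_apply]
    exact (key n i j).1 (by omega)
  -- N * Y = Y * S
  have hNY : N * Y = Y * S := by
    ext i j
    have hL : (N * Y) i j = (N ^ ((n - 1 - (j : ℕ)) + 1)) i last := by
      rw [pow_succ', mul_apply, mul_apply]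
    rcases Nat.eq_zero_or_pos (j : ℕ) with hj | hj
    · have : (n - 1 - (j : ℕ)) + 1 = n := by omega
      rw [hL, this, hNn]
      rw [mul_apply]
      simp only [Matrix.zero_apply]
      symm
      apply Finset.sum_eq_zero
      intro l _
      rw [hS l j, if_neg (by omega), mul_zero]
    · have hjlt : (j : ℕ) - 1 < n := by omega
      have hR2 : (Y * S) i j = Y i ⟨(j : ℕ) - 1, hjlt⟩ := by
        rw [mul_apply, Finset.sum_eq_single (⟨(j : ℕ) - 1, hjlt⟩ : Fin n)]
        · rw [hS, if_pos (by simp; omega), mul_one]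
        · intro l _ hl
          rw [hS, if_neg, mul_zero]
          intro h
          exact hl (Fin.ext (by simp; omega))
        · intro h; exact absurd (Finset.mem_univ _) h
      rw [hL, hR2, hYdef]
      have : (n - 1 - (j : ℕ)) + 1 = n - 1 - ((j : ℕ) - 1) := by omega
      rw [this]
    -- done
  refine ⟨Y⁻¹, ?_, ?_⟩
  · rw [Matrix.nonsing_inv_eq_ringInverse]
    exact isUnit_ringInverse.2 hYunit
  · rw [Matrix.nonsing_inv_nonsing_inv Y hdetU]
    calc S = (Y⁻¹ * Y) * S := by rw [Matrix.nonsing_inv_mul Y hdetU, one_mul]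
    _ = Y⁻¹ * (Y * S) := by rw [mul_assoc]
    _ = Y⁻¹ * (N * Y) := by rw [hNY]
    _ = Y⁻¹ * N * Y := by rw [mul_assoc]
end
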